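/- arXiv:1706.08423 — 10 statements merged into one kernel-verified Lean document; each statement's English description precedes it below -/
import Mathlib

section
/- Let p be a prime number. If 2p = (q^d - 1)/(q - 1) for some prime power q and some integer d ≥ 2, then d = 2. -/
lemma geom_parity_aux (q : ℕ) (hq : q % 2 = 1) (n : ℕ) :
    (∑ i ∈ Finset.range n, q ^ i) % 2 = n % 2 := by
  induction n with
  | zero => simp
  | succ k ih =>
    rw [Finset.sum_range_succ]
    have hk : q ^ k % 2 = 1 := by simp [Nat.pow_mod, hq]
    omega

lemma geom_factor_aux (q m : ℕ) :
    ∑ i ∈ Finset.range (2 * m), q ^ i = (1 + q) * ∑ j ∈ Finset.range m, q ^ (2 * j) := by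
  induction m with
  | zero => simp
  | succ n ih =>
    have h2 : 2 * (n + 1) = (2 * n) + 1 + 1 := by ring
    rw [h2, Finset.sum_range_succ, Finset.sum_range_succ, ih, Finset.sum_range_succ]
    ring

/-- If `p` is prime, `q` is a prime power and `2p = 1 + q + ⋯ + q^(d-1)` with `d ≥ 2`,
then `d = 2`. -/
theorem two_p_eq_geom_sum_imp_d_eq_two (p q d : ℕ) (hp : p.Prime) (hq : IsPrimePow q)
    (hd : 2 ≤ d) (h : 2 * p = ∑ i ∈ Finset.range d, q ^ i) : d = 2 := by
  have hq2 : 2 ≤ q := hq.two_le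
  -- q is odd
  have hqodd : q % 2 = 1 := by
    rcases Nat.mod_two_eq_zero_or_one q with h0 | h1
    · exfalso
      obtain ⟨k, hk⟩ : ∃ k, d = k + 1 := ⟨d - 1, by omega⟩
      subst hk
      rw [Finset.sum_range_succ'] at h
      simp only [pow_zero] at h
      have : ∀ i ∈ Finset.range k, q ^ (i + 1) % 2 = 0 := by
        intro i _
        rw [Nat.pow_mod, h0, Nat.zero_pow (by omega), Nat.zero_mod]
      have hsum : (∑ i ∈ Finset.range k, q ^ (i + 1)) % 2 = 0 := by
        rw [Finset.sum_nat_mod, Finset.sum_congr rfl this]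
        simp
      omega
    · exact h1
  -- d is even
  have hdpar : d % 2 = 0 := by
    have := geom_parity_aux q hqodd d
    omega
  obtain ⟨m, hm⟩ : ∃ m, d = 2 * m := ⟨d / 2, by omega⟩
  subst hm
  rw [geom_factor_aux] at h
  obtain ⟨t, ht⟩ : ∃ t, 1 + q = 2 * t := ⟨(1 + q) / 2, by omega⟩
  have ht2 : 2 ≤ t := by omega
  rw [ht, mul_assoc] at h
  have hp' : p = t * ∑ j ∈ Finset.range m, q ^ (2 * j) := by omega
  have htdvd : t ∣ p := ⟨_, hp'⟩
  have htp : t = p := ((Nat.dvd_prime hp).mp htdvd).resolve_left (by omega)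
  have hS : (∑ j ∈ Finset.range m, q ^ (2 * j)) = 1 := by
    have hppos := hp.pos
    rw [htp] at hp'
    nlinarith [hp']
  -- m = 1
  have hm1 : m = 1 := by
    by_contra hne
    have hm2 : 2 ≤ m := by omega
    obtain ⟨l, hl⟩ : ∃ l, m = l + 2 := ⟨m - 2, by omega⟩
    subst hl
    rw [Finset.sum_range_succ, Finset.sum_range_succ] at hS
    have h1 : 1 ≤ q ^ (2 * l) := Nat.one_le_pow _ _ (by omega)
    have h2 : 4 ≤ q ^ (2 * (l + 1)) := by
      calc 4 = 2 ^ 2 := by norm_num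
      _ ≤ q ^ 2 := Nat.pow_le_pow_left hq2 2
      _ ≤ q ^ (2 * (l + 1)) := Nat.pow_le_pow_right (by omega) (by omega)
    omega
  omega
end

section
/- Let z = (a_1, ..., a_r) be a partition of a natural number n, and suppose there exists some 1 ≤ i ≤ n/2 that is not a partial sum of z (i.e., not expressible as a sum of a subset of the parts). Let i be the minimal such number. Then there is a subset of the parts summing to exactly i - 1, and every part of z not in this subset has length at least i + 1. -/
/-- `k` is a partial sum of the multiset `z` if some sub-multiset of `z` sums to `k`. -/
def IsPartialSum (z : Multiset ℕ) (k : ℕ) : Prop := ∃ s, s ≤ z ∧ s.sum = k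

lemma msum_mono {s t : Multiset ℕ} (h : s ≤ t) : s.sum ≤ t.sum := by
  obtain ⟨u, rfl⟩ := Multiset.le_iff_exists_add.mp h
  simp

lemma mem_le_sum {t : Multiset ℕ} {b : ℕ} (hb : b ∈ t) : b ≤ t.sum := by
  have := Multiset.cons_erase hb
  calc b ≤ b + (t.erase b).sum := Nat.le_add_right _ _
    _ = (b ::ₘ t.erase b).sum := (Multiset.sum_cons _ _).symm
    _ = t.sum := by rw [this]

lemma mexists_min {u : Multiset ℕ} (h : u ≠ 0) : ∃ a ∈ u, ∀ b ∈ u, a ≤ b := by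
  induction u using Multiset.induction with
  | empty => exact absurd rfl h
  | cons c w ih =>
    rcases eq_or_ne w 0 with rfl | hw
    · exact ⟨c, by simp, by simp⟩
    · obtain ⟨a, ha, hmin⟩ := ih hw
      rcases le_total c a with hca | hac
      · exact ⟨c, Multiset.mem_cons_self _ _, by
          intro b hb
          rcases Multiset.mem_cons.mp hb with rfl | hb
          · exact le_refl _
          · exact hca.trans (hmin b hb)⟩
      · exact ⟨a, Multiset.mem_cons_of_mem ha, by
          intro b hb
          rcases Multiset.mem_cons.mp hb with rfl | hb
          · exact hac
          · exact hmin b hb⟩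

/-- If `i` is minimal in `[1, n/2]` not a partial sum of the partition `z` of `n`, then some
sub-multiset of parts sums to `i - 1` and every remaining part is at least `i + 1`. -/
theorem minimal_non_partial_sum (n : ℕ) (z : Multiset ℕ) (hz : ∀ a ∈ z, 0 < a)
    (hsum : z.sum = n) (i : ℕ) (hi1 : 1 ≤ i) (hi2 : i ≤ n / 2)
    (hps : ¬ IsPartialSum z i) (hmin : ∀ j, 1 ≤ j → j < i → IsPartialSum z j) :
    ∃ s, s ≤ z ∧ s.sum = i - 1 ∧ ∀ a ∈ z - s, i + 1 ≤ a := by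
  classical
  set s : Multiset ℕ := z.filter (fun a => a < i) with hs
  have hsz : s ≤ z := Multiset.filter_le _ z
  -- no element of z equals i
  have hne : ∀ a ∈ z, a ≠ i := by
    intro a ha hai
    exact hps ⟨{a}, Multiset.singleton_le.mpr ha, by simp [hai]⟩
  -- key: no sub-multiset of s has sum ≥ i
  have key : ∀ c (u : Multiset ℕ), u.card = c → u ≤ s → i ≤ u.sum → False := by
    intro c
    induction c using Nat.strong_induction_on with
    | _ c ih =>
      intro u hcard hus hisum
      have huz : u ≤ z := hus.trans hsz
      have hune : u ≠ 0 := by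
        rintro rfl; simp at hisum; omega
      -- if u.sum = i, direct contradiction
      rcases eq_or_lt_of_le hisum with heq | hlt
      · exact hps ⟨u, huz, heq.symm⟩
      -- take minimal element a
      obtain ⟨a, hau, hamin⟩ := mexists_min hune
      have haz : a ∈ z := Multiset.mem_of_le huz hau
      have hapos : 0 < a := hz a haz
      have hai : a < i := (Multiset.mem_filter.mp (Multiset.mem_of_le hus hau)).2
      set w : Multiset ℕ := u.erase a with hw
      have hcons : a ::ₘ w = u := Multiset.cons_erase hau
      have hsumu : a + w.sum = u.sum := by
        rw [← Multiset.sum_cons, hcons]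
      have hwu : w ≤ u := Multiset.erase_le a u
      rcases le_or_gt i w.sum with hge | hwlt
      · -- recurse on smaller w
        have hwcard : w.card < c := by
          rw [← hcard, ← hcons]; simp
        exact ih w.card hwcard w rfl (hwu.trans hus) hge
      · -- w.sum < i; set j = i - w.sum
        set j : ℕ := i - w.sum with hj
        have hj1 : 1 ≤ j := by omega
        have hja : j < a := by omega
        have hji : j < i := by omega
        obtain ⟨t, htz, hts⟩ := hmin j hj1 hji
        -- elements of t are < a, elements of w are ≥ a
        have htlt : ∀ b ∈ t, b < a := fun b hb =>
          lt_of_le_of_lt (hts ▸ mem_le_sum hb) hja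
        have hwge : ∀ b ∈ w, a ≤ b := fun b hb =>
          hamin b (Multiset.mem_of_mem_erase hb)
        -- w + t ≤ z
        have hwtz : w + t ≤ z := by
          rw [Multiset.le_iff_count]
          intro v
          rw [Multiset.count_add]
          rcases lt_or_ge v a with hva | hva
          · have : v ∉ w := fun hv => absurd (hwge v hv) (by omega)
            rw [Multiset.count_eq_zero_of_notMem this]
            simpa using Multiset.le_iff_count.mp htz v
          · have : v ∉ t := fun hv => absurd (htlt v hv) (by omega)
            rw [Multiset.count_eq_zero_of_notMem this]
            have h1 := Multiset.le_iff_count.mp (hwu.trans huz) v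
            omega
        exact hps ⟨w + t, hwtz, by rw [Multiset.sum_add]; omega⟩
  refine ⟨s, hsz, ?_, ?_⟩
  · -- s.sum = i - 1
    have hle : s.sum ≤ i - 1 := by
      by_contra h
      exact key s.card s rfl le_rfl (by omega)
    have hge : i - 1 ≤ s.sum := by
      rcases Nat.eq_or_lt_of_le hi1 with h1 | h2
      · omega
      · obtain ⟨t, htz, hts⟩ := hmin (i - 1) (by omega) (by omega)
        have hts' : t ≤ s := by
          rw [hs, Multiset.le_filter]
          refine ⟨htz, fun b hb => ?_⟩
          have := mem_le_sum hb
          omega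
        have := msum_mono hts'
        omega
    omega
  · intro a ha
    have haz : a ∈ z := Multiset.mem_of_le (Multiset.sub_le_self z s) ha
    have hcount : 0 < Multiset.count a (z - s) := Multiset.count_pos.mpr ha
    rw [Multiset.count_sub] at hcount
    have : ¬ a < i := by
      intro hai
      rw [hs, Multiset.count_filter] at hcount
      simp [hai] at hcount
    have := hne a haz
    omega
end

section
/- Let n ≡ 1 (mod 3) and let z be the partition of n consisting of one part equal to 1 and (n-1)/3 parts equal to 3. Then an integer i with 1 ≤ i ≤ n is a partial sum of z if and only if i is not congruent to 2 modulo 3. Consequently, for any two positive integers a_1, a_2 with a_1 + a_2 ≤ n, at least one of a_1, a_2, a_1 + a_2 is a partial sum of z. -/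
lemma psum_char (m i : ℕ) :
    IsPartialSum (1 ::ₘ Multiset.replicate m 3) i ↔ ∃ j ≤ m, i = 3*j ∨ i = 3*j + 1 := by
  constructor
  · rintro ⟨s, hs, rfl⟩
    by_cases h1 : (1 : ℕ) ∈ s
    · obtain ⟨s', rfl⟩ := Multiset.exists_cons_of_mem h1
      have hs' : s' ≤ Multiset.replicate m 3 := by
        have := Multiset.erase_le_erase (1 : ℕ) hs
        simpa using this
      obtain ⟨k, hk, rfl⟩ := Multiset.le_replicate_iff.1 hs'
      exact ⟨k, hk, Or.inr (by simp [Multiset.sum_replicate, Nat.mul_comm, Nat.add_comm])⟩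
    · have hs' : s ≤ Multiset.replicate m 3 := by
        rw [Multiset.le_iff_count] at hs ⊢
        intro a
        rcases eq_or_ne a 1 with rfl | ha
        · simp [Multiset.count_eq_zero_of_notMem h1]
        · have := hs a
          simpa [Multiset.count_cons, ha] using this
      obtain ⟨k, hk, rfl⟩ := Multiset.le_replicate_iff.1 hs'
      exact ⟨k, hk, Or.inl (by simp [Multiset.sum_replicate, Nat.mul_comm])⟩
  · rintro ⟨j, hj, rfl | rfl⟩
    · exact ⟨Multiset.replicate j 3, le_trans (Multiset.replicate_mono _ hj)
        (Multiset.le_cons_self _ _), by simp [Multiset.sum_replicate, Nat.mul_comm]⟩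
    · exact ⟨1 ::ₘ Multiset.replicate j 3,
        Multiset.cons_le_cons _ (Multiset.replicate_mono _ hj),
        by simp [Multiset.sum_replicate, Nat.mul_comm, Nat.add_comm]⟩

/-- For `n ≡ 1 (mod 3)` and `z = (1, 3^((n-1)/3))`: an `i ∈ [1, n]` is a partial sum of `z`
iff `i ≢ 2 (mod 3)`; consequently, for positive `a₁, a₂` with `a₁ + a₂ ≤ n`, at least one of
`a₁`, `a₂`, `a₁ + a₂` is a partial sum of `z`. -/
theorem partial_sums_one_threes (n : ℕ) (hn : n % 3 = 1) :
    (∀ i, 1 ≤ i → i ≤ n →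
      (IsPartialSum (1 ::ₘ Multiset.replicate ((n - 1) / 3) 3) i ↔ ¬ i % 3 = 2)) ∧
    (∀ a₁ a₂ : ℕ, 0 < a₁ → 0 < a₂ → a₁ + a₂ ≤ n →
      IsPartialSum (1 ::ₘ Multiset.replicate ((n - 1) / 3) 3) a₁ ∨
      IsPartialSum (1 ::ₘ Multiset.replicate ((n - 1) / 3) 3) a₂ ∨
      IsPartialSum (1 ::ₘ Multiset.replicate ((n - 1) / 3) 3) (a₁ + a₂)) := by
  obtain ⟨m, rfl⟩ : ∃ m, n = 3 * m + 1 := ⟨n / 3, by omega⟩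
  have hm : (3 * m + 1 - 1) / 3 = m := by omega
  rw [hm]
  have key : ∀ i, 1 ≤ i → i ≤ 3 * m + 1 →
      (IsPartialSum (1 ::ₘ Multiset.replicate m 3) i ↔ ¬ i % 3 = 2) := by
    intro i h1 h2
    rw [psum_char]
    constructor
    · rintro ⟨j, hj, rfl | rfl⟩ <;> omega
    · intro h
      rcases (by omega : i % 3 = 0 ∨ i % 3 = 1) with h0 | h0
      · exact ⟨i / 3, by omega, Or.inl (by omega)⟩
      · exact ⟨i / 3, by omega, Or.inr (by omega)⟩
  refine ⟨key, fun a₁ a₂ h1 h2 h3 => ?_⟩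
  by_cases c1 : a₁ % 3 = 2
  · by_cases c2 : a₂ % 3 = 2
    · exact Or.inr (Or.inr ((key _ (by omega) (by omega)).2 (by omega)))
    · exact Or.inr (Or.inl ((key _ (by omega) (by omega)).2 c2))
  · exact Or.inl ((key _ (by omega) (by omega)).2 c1)
end

section
/- Let n ≥ 4 be a square and let g = ((σ_1, σ_2), τ) be an element of S_√n ≀ S_2 in its product action on a set of size n. If the cycle type of g (as a permutation of the n points) has an odd part of length at least √n + 1, then τ = 1. -/
/-- The full cycle type of a permutation: the multiset of lengths of the orbits,
i.e. the usual cycle type together with one part `1` for each fixed point. -/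
def fullCycleType {α : Type*} [Fintype α] [DecidableEq α] (g : Equiv.Perm α) :
    Multiset ℕ :=
  g.cycleType + Multiset.replicate (Fintype.card {x // g x = x}) 1

/-- If an element `g = ((σ₁, σ₂), τ)` of `S_√n ≀ S_2` in its product action on `n = m²`
points has an odd part of length at least `√n + 1` in its cycle type, then `τ = 1`. -/
theorem wreath_odd_long_cycle_implies_untwisted (X : Type*) [Fintype X] [DecidableEq X]
    (m : ℕ) (hm : Fintype.card X = m) (h4 : 4 ≤ m * m) (σ₁ σ₂ : Equiv.Perm X)
    (τ : Equiv.Perm (Fin 2)) (g : Equiv.Perm (X × X))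
    (hg : ∀ p : X × X, g p = if τ = 1 then (σ₁ p.1, σ₂ p.2) else (σ₂ p.2, σ₁ p.1))
    (hodd : ∃ b ∈ fullCycleType g, Odd b ∧ m + 1 ≤ b) :
    τ = 1 := by
  by_contra hτ
  have hg' : ∀ p : X × X, g p = (σ₂ p.2, σ₁ p.1) := by
    intro p; rw [hg p, if_neg hτ]
  have hpow : ∀ j : ℕ, ∃ f h : X → X, ∀ p : X × X, (g ^ (2*j+1)) p = (f p.2, h p.1) := by
    intro j
    induction j with
    | zero => exact ⟨σ₂, σ₁, by simpa using hg'⟩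
    | succ j ih =>
      obtain ⟨f, h, hfh⟩ := ih
      refine ⟨fun x => f (σ₁ (σ₂ x)), fun x => h (σ₂ (σ₁ x)), fun p => ?_⟩
      have he : 2*(j+1)+1 = (2*j+1) + 1 + 1 := by ring
      rw [he, pow_succ, pow_succ, Equiv.Perm.mul_apply, Equiv.Perm.mul_apply, hfh, hg', hg']
  obtain ⟨b, hb, hbodd, hble⟩ := hodd
  have hm2 : 2 ≤ m := by nlinarith
  have hbcyc : b ∈ g.cycleType := by
    rcases Multiset.mem_add.mp hb with h | h
    · exact h
    · have := Multiset.eq_of_mem_replicate h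
      omega
  obtain ⟨c, hc, hcb⟩ : ∃ c ∈ g.cycleFactorsFinset, c.support.card = b := by
    simpa [Equiv.Perm.cycleType, Function.comp] using hbcyc
  have hfix : ∀ x ∈ c.support, (g ^ b) x = x := by
    intro x hx
    have hco : g.cycleOf x = c := (Equiv.Perm.cycle_is_cycleOf hx hc).symm
    have h1 : (g.cycleOf x) ^ b = 1 := by
      rw [hco]
      have hcyc : c.IsCycle := (Equiv.Perm.mem_cycleFactorsFinset_iff.mp hc).1
      rw [← hcb, ← hcyc.orderOf, pow_orderOf_eq_one]
    calc (g^b) x = ((g.cycleOf x)^b) x := (Equiv.Perm.cycleOf_pow_apply_self g x b).symm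
    _ = x := by rw [h1]; rfl
  obtain ⟨j, hj⟩ := hbodd
  obtain ⟨f, h, hfh⟩ := hpow j
  have hinj : Set.InjOn (fun p : X × X => p.2) c.support := by
    intro x hx y hy hxy
    have hx' := hfix x hx
    have hy' := hfix y hy
    rw [hj, hfh] at hx' hy'
    have h1 : f x.2 = x.1 := congrArg Prod.fst hx'
    have h2 : f y.2 = y.1 := congrArg Prod.fst hy'
    simp only at hxy
    exact Prod.ext (by rw [← h1, ← h2, hxy]) hxy
  have hcard : c.support.card ≤ Fintype.card X := by
    have := Finset.card_le_card_of_injOn (fun p : X × X => p.2)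
      (fun x _ => Finset.mem_univ _) hinj
    simpa using this
  rw [hcb, hm] at hcard
  omega
end

section
/- Let n ≥ 4 be a square and let g = ((σ_1, σ_2), 1) be an element of S_√n × S_√n acting coordinatewise on X × X with |X| = √n. If every integer i with 1 ≤ i ≤ √n - 1 is a partial sum of the cycle type of g, then every integer i with 1 ≤ i ≤ 2√n - 1 is a partial sum of the cycle type of g. -/
lemma multiset_sum_le_of_le (s t : Multiset ℕ) (h : s ≤ t) : s.sum ≤ t.sum := by
  obtain ⟨u, rfl⟩ := Multiset.le_iff_exists_add.mp h
  rw [Multiset.sum_add]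
  omega

/-- If `t` is a partial sum, then the parts of size ≤ t sum to at least `t`. -/
lemma filter_sum_ge_of_partialSum (z : Multiset ℕ) (t : ℕ) (h : IsPartialSum z t) :
    t ≤ (z.filter (· ≤ t)).sum := by
  obtain ⟨s, hs, rfl⟩ := h
  have hle : s ≤ z.filter (· ≤ s.sum) :=
    Multiset.le_filter.mpr ⟨hs, fun b hb => Multiset.single_le_sum (fun _ _ => Nat.zero_le _) b hb⟩
  exact multiset_sum_le_of_le _ _ hle

/-- Greedy criterion: if for every `1 ≤ t ≤ k` the parts of `z` of size at most `t`
sum to at least `t`, then `k` is a partial sum of `z`. -/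
lemma isPartialSum_of_filter_sum : ∀ (k : ℕ) (z : Multiset ℕ),
    (∀ t, 1 ≤ t → t ≤ k → t ≤ (z.filter (· ≤ t)).sum) → IsPartialSum z k := by
  intro k
  induction k using Nat.strong_induction_on with
  | _ k ih =>
    intro z hz
    rcases Nat.eq_zero_or_pos k with rfl | hk
    · exact ⟨0, zero_le, rfl⟩
    have h1 : k ≤ (z.filter (· ≤ k)).sum := hz k hk le_rfl
    have hne : (z.filter (· ≤ k)).toFinset.Nonempty := by
      rw [Multiset.toFinset_nonempty]
      intro h0
      rw [h0] at h1
      simp at h1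
      omega
    set a := (z.filter (· ≤ k)).toFinset.max' hne with ha_def
    have ha : a ∈ z.filter (· ≤ k) := Multiset.mem_toFinset.mp (Finset.max'_mem _ _)
    have haz : a ∈ z := (Multiset.mem_filter.mp ha).1
    have hak : a ≤ k := (Multiset.mem_filter.mp ha).2
    have hamax : ∀ b ∈ z, b ≤ k → b ≤ a := by
      intro b hb hbk
      have hbf : b ∈ z.filter (· ≤ k) := Multiset.mem_filter.mpr ⟨hb, hbk⟩
      exact Finset.le_max' _ b (Multiset.mem_toFinset.mpr hbf)
    have ha1 : 1 ≤ a := by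
      by_contra h0
      push_neg at h0
      have hall : ∀ x ∈ z.filter (· ≤ k), x = 0 := by
        intro x hx
        have := hamax x (Multiset.mem_filter.mp hx).1 (Multiset.mem_filter.mp hx).2
        omega
      have : (z.filter (· ≤ k)).sum = 0 := by
        rw [Multiset.sum_eq_zero_iff]
        exact hall
      omega
    have hstep : ∀ t, 1 ≤ t → t ≤ k - a → t ≤ ((z.erase a).filter (· ≤ t)).sum := by
      intro t ht1 htk
      have hz' := Multiset.cons_erase haz
      by_cases hat : a ≤ t
      · have hfe : z.filter (· ≤ t) = z.filter (· ≤ k) := by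
          apply Multiset.filter_congr
          intro x hx
          constructor
          · intro hxt; omega
          · intro hxk; exact le_trans (hamax x hx hxk) hat
        have hsum : k ≤ (z.filter (· ≤ t)).sum := hfe ▸ h1
        have hcons : z.filter (· ≤ t) = a ::ₘ (z.erase a).filter (· ≤ t) := by
          conv_lhs => rw [← hz']
          rw [Multiset.filter_cons_of_pos (p := fun x => x ≤ t) _ hat]
        rw [hcons, Multiset.sum_cons] at hsum
        omega
      · have heq : (z.erase a).filter (· ≤ t) = z.filter (· ≤ t) := by
          conv_rhs => rw [← hz']
          rw [Multiset.filter_cons_of_neg (p := fun x => x ≤ t) _ hat]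
        rw [heq]
        exact hz t ht1 (by omega)
    obtain ⟨s, hs, hsum⟩ := ih (k - a) (by omega) (z.erase a) hstep
    refine ⟨a ::ₘ s, ?_, ?_⟩
    · rw [← Multiset.cons_erase haz]
      exact Multiset.cons_le_cons a hs
    · rw [Multiset.sum_cons, hsum]
      omega

lemma prodCongr_pow_apply {α β : Type*} (σ₁ : Equiv.Perm α) (σ₂ : Equiv.Perm β) :
    ∀ (n : ℕ) (p : α × β),
      ((Equiv.prodCongr σ₁ σ₂ : Equiv.Perm (α × β)) ^ n) p = ((σ₁ ^ n) p.1, (σ₂ ^ n) p.2) := by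
  intro n
  induction n with
  | zero => intro p; simp
  | succ n ihn =>
    intro p
    rw [pow_succ, Equiv.Perm.mul_apply, ihn]
    cases p with
    | mk a b => simp [pow_succ, Equiv.Perm.mul_apply]

lemma cycle_card_le_fst {α β : Type*} [Fintype α] [DecidableEq α] [Fintype β] [DecidableEq β]
    (σ₁ : Equiv.Perm α) (σ₂ : Equiv.Perm β) (x : α) (y : β) (hx : σ₁ x = x) :
    (Equiv.Perm.cycleOf (Equiv.prodCongr σ₁ σ₂ : Equiv.Perm (α × β)) (x, y)).support.card
      ≤ σ₂.support.card := by
  have key : ∀ q ∈ (Equiv.Perm.cycleOf (Equiv.prodCongr σ₁ σ₂ : Equiv.Perm (α × β)) (x, y)).support,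
      q.1 = x ∧ q.2 ∈ σ₂.support := by
    intro q hq
    rw [Equiv.Perm.mem_support_cycleOf_iff] at hq
    obtain ⟨hsc, hmem⟩ := hq
    have hy : σ₂ y ≠ y := by
      intro hyy
      apply Equiv.Perm.mem_support.mp hmem
      show Equiv.prodCongr σ₁ σ₂ (x, y) = (x, y)
      simp [hx, hyy]
    obtain ⟨n, _, hn⟩ := hsc.exists_pow_eq'
    rw [prodCongr_pow_apply] at hn
    rw [← hn]
    constructor
    · exact Equiv.Perm.pow_apply_eq_self_of_apply_eq_self hx n
    · exact Equiv.Perm.pow_apply_mem_support.mpr (Equiv.Perm.mem_support.mpr hy)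
  apply Finset.card_le_card_of_injOn Prod.snd (fun q hq => (key q hq).2)
  intro q hq q' hq' hqq
  exact Prod.ext ((key q hq).1.trans (key q' hq').1.symm) hqq

lemma cycle_card_le_snd {α β : Type*} [Fintype α] [DecidableEq α] [Fintype β] [DecidableEq β]
    (σ₁ : Equiv.Perm α) (σ₂ : Equiv.Perm β) (x : α) (y : β) (hy : σ₂ y = y) :
    (Equiv.Perm.cycleOf (Equiv.prodCongr σ₁ σ₂ : Equiv.Perm (α × β)) (x, y)).support.card
      ≤ σ₁.support.card := by
  have key : ∀ q ∈ (Equiv.Perm.cycleOf (Equiv.prodCongr σ₁ σ₂ : Equiv.Perm (α × β)) (x, y)).support,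
      q.2 = y ∧ q.1 ∈ σ₁.support := by
    intro q hq
    rw [Equiv.Perm.mem_support_cycleOf_iff] at hq
    obtain ⟨hsc, hmem⟩ := hq
    have hxne : σ₁ x ≠ x := by
      intro hxx
      apply Equiv.Perm.mem_support.mp hmem
      show Equiv.prodCongr σ₁ σ₂ (x, y) = (x, y)
      simp [hy, hxx]
    obtain ⟨n, _, hn⟩ := hsc.exists_pow_eq'
    rw [prodCongr_pow_apply] at hn
    rw [← hn]
    constructor
    · exact Equiv.Perm.pow_apply_eq_self_of_apply_eq_self hy n
    · exact Equiv.Perm.pow_apply_mem_support.mpr (Equiv.Perm.mem_support.mpr hxne)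
  apply Finset.card_le_card_of_injOn Prod.fst (fun q hq => (key q hq).2)
  intro q hq q' hq' hqq
  exact Prod.ext hqq ((key q hq).1.trans (key q' hq').1.symm)

/-- For `g = ((σ₁, σ₂), 1)` acting coordinatewise on `X × X` with `|X| = √n = m`, if every
`1 ≤ i ≤ m - 1` is a partial sum of the cycle type of `g`, then so is every
`1 ≤ i ≤ 2m - 1`. -/
theorem wreath_untwisted_partial_sums (X : Type*) [Fintype X] [DecidableEq X]
    (m : ℕ) (hm : Fintype.card X = m) (h4 : 4 ≤ m * m) (σ₁ σ₂ : Equiv.Perm X)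
    (g : Equiv.Perm (X × X)) (hg : ∀ p : X × X, g p = (σ₁ p.1, σ₂ p.2))
    (h : ∀ i, 1 ≤ i → i ≤ m - 1 → IsPartialSum (fullCycleType g) i) :
    ∀ i, 1 ≤ i → i ≤ 2 * m - 1 → IsPartialSum (fullCycleType g) i := by
  classical
  have hm2 : 2 ≤ m := by
    by_contra h'
    push_neg at h'
    have : m * m ≤ 1 * 1 := Nat.mul_le_mul (by omega) (by omega)
    omega
  set z := fullCycleType g with hzdef
  -- there is a fixed point of g
  have h1z : (1 : ℕ) ∈ z := by
    obtain ⟨s, hs, hsum⟩ := h 1 le_rfl (by omega)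
    have hs0 : s ≠ 0 := by
      intro h0; rw [h0] at hsum; simp at hsum
    obtain ⟨b, hb⟩ := Multiset.exists_mem_of_ne_zero hs0
    have hbz : b ∈ z := Multiset.mem_of_le hs hb
    have hb1 : b ≤ 1 := hsum ▸ Multiset.single_le_sum (fun _ _ => Nat.zero_le _) b hb
    have hbpos : 1 ≤ b := by
      rcases Multiset.mem_add.mp hbz with h' | h'
      · have := Equiv.Perm.two_le_of_mem_cycleType h'; omega
      · rw [Multiset.eq_of_mem_replicate h']
    have : b = 1 := le_antisymm hb1 hbpos
    rwa [← this]
  obtain ⟨p₀, hp₀⟩ : ∃ p : X × X, g p = p := by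
    rcases Multiset.mem_add.mp h1z with h' | h'
    · have := Equiv.Perm.two_le_of_mem_cycleType h'; omega
    · have hcard : Fintype.card {x // g x = x} ≠ 0 := by
        intro h0; rw [h0] at h'; simp at h'
      obtain ⟨⟨p, hp⟩⟩ := Fintype.card_pos_iff.mp (Nat.pos_of_ne_zero hcard)
      exact ⟨p, hp⟩
  have hfixp : σ₁ p₀.1 = p₀.1 ∧ σ₂ p₀.2 = p₀.2 := by
    have h1 := hg p₀
    rw [hp₀] at h1
    exact ⟨(congrArg Prod.fst h1).symm, (congrArg Prod.snd h1).symm⟩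
  set x₀ := p₀.1
  set y₀ := p₀.2
  have hgp : g = Equiv.prodCongr σ₁ σ₂ := by
    apply Equiv.ext
    intro p
    rw [hg p]
    cases p
    simp
  -- supports of σ₁ and σ₂ are small
  have hsupp1 : σ₁.support.card ≤ m - 1 := by
    have hsub : σ₁.support ⊆ Finset.univ.erase x₀ := by
      intro b hb
      refine Finset.mem_erase.mpr ⟨?_, Finset.mem_univ _⟩
      rintro rfl
      exact (Equiv.Perm.mem_support.mp hb) hfixp.1
    calc σ₁.support.card ≤ (Finset.univ.erase x₀).card := Finset.card_le_card hsub
      _ = m - 1 := by rw [Finset.card_erase_of_mem (Finset.mem_univ _), Finset.card_univ, hm]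
  have hsupp2 : σ₂.support.card ≤ m - 1 := by
    have hsub : σ₂.support ⊆ Finset.univ.erase y₀ := by
      intro b hb
      refine Finset.mem_erase.mpr ⟨?_, Finset.mem_univ _⟩
      rintro rfl
      exact (Equiv.Perm.mem_support.mp hb) hfixp.2
    calc σ₂.support.card ≤ (Finset.univ.erase y₀).card := Finset.card_le_card hsub
      _ = m - 1 := by rw [Finset.card_erase_of_mem (Finset.mem_univ _), Finset.card_univ, hm]
  -- the main counting inequality
  have hmain : 2 * m - 1 ≤ (z.filter (· ≤ m - 1)).sum := by
    set S : Finset (Equiv.Perm (X × X)) :=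
      g.cycleFactorsFinset.filter (fun c => c.support.card ≤ m - 1) with hS
    set B : Finset (X × X) := S.biUnion Equiv.Perm.support with hB
    set C : Finset (X × X) := Finset.univ.filter (fun p => g p = p) with hC
    set A : Finset (X × X) := ({x₀} ×ˢ Finset.univ) ∪ (Finset.univ ×ˢ {y₀}) with hA
    have hAcard : A.card = 2 * m - 1 := by
      have h1 : ({x₀} ×ˢ (Finset.univ : Finset X)).card = m := by
        rw [Finset.card_product, Finset.card_singleton, Finset.card_univ, hm, one_mul]
      have h2 : ((Finset.univ : Finset X) ×ˢ ({y₀} : Finset X)).card = m := by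
        rw [Finset.card_product, Finset.card_singleton, Finset.card_univ, hm, mul_one]
      have hint : (({x₀} ×ˢ (Finset.univ : Finset X)) ∩ ((Finset.univ : Finset X) ×ˢ {y₀}))
          = {(x₀, y₀)} := by
        ext q
        simp [Finset.mem_product, Prod.ext_iff, eq_comm]
      have hcui := Finset.card_union_add_card_inter
        ({x₀} ×ˢ (Finset.univ : Finset X)) ((Finset.univ : Finset X) ×ˢ {y₀})
      rw [hint, h1, h2, Finset.card_singleton] at hcui
      rw [hA]
      omega
    have hsub : A ⊆ B ∪ C := by
      intro q hq
      by_cases hq0 : g q = q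
      · exact Finset.mem_union_right _ (Finset.mem_filter.mpr ⟨Finset.mem_univ _, hq0⟩)
      · apply Finset.mem_union_left
        have hqs : q ∈ g.support := Equiv.Perm.mem_support.mpr hq0
        have hcm : g.cycleOf q ∈ g.cycleFactorsFinset :=
          Equiv.Perm.cycleOf_mem_cycleFactorsFinset_iff.mpr hqs
        have hqc : q ∈ (g.cycleOf q).support :=
          Equiv.Perm.mem_support_cycleOf_iff.mpr ⟨Equiv.Perm.SameCycle.refl _ _, hqs⟩
        have hqA : q.1 = x₀ ∨ q.2 = y₀ := by
          rcases Finset.mem_union.mp hq with h' | h'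
          · exact Or.inl (Finset.mem_singleton.mp (Finset.mem_product.mp h').1)
          · exact Or.inr (Finset.mem_singleton.mp (Finset.mem_product.mp h').2)
        have hcard : (g.cycleOf q).support.card ≤ m - 1 := by
          rcases hqA with h' | h'
          · have hq' : q = (x₀, q.2) := Prod.ext h' rfl
            have := cycle_card_le_fst σ₁ σ₂ x₀ q.2 hfixp.1
            rw [← hgp, ← hq'] at this
            omega
          · have hq' : q = (q.1, y₀) := Prod.ext rfl h'
            have := cycle_card_le_snd σ₁ σ₂ q.1 y₀ hfixp.2
            rw [← hgp, ← hq'] at this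
            omega
        exact Finset.mem_biUnion.mpr ⟨g.cycleOf q, Finset.mem_filter.mpr ⟨hcm, hcard⟩, hqc⟩
    have hBC : 2 * m - 1 ≤ B.card + C.card := by
      calc 2 * m - 1 = A.card := hAcard.symm
        _ ≤ (B ∪ C).card := Finset.card_le_card hsub
        _ ≤ B.card + C.card := Finset.card_union_le _ _
    have hBcard : B.card = ∑ c ∈ S, c.support.card := by
      apply Finset.card_biUnion
      intro c hc d hd hcd
      have hc' := (Finset.mem_filter.mp hc).1
      have hd' := (Finset.mem_filter.mp hd).1
      exact Equiv.Perm.Disjoint.disjoint_support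
        (Equiv.Perm.cycleFactorsFinset_pairwise_disjoint g hc' hd' hcd)
    have hCcard : C.card = Fintype.card {x // g x = x} := by
      rw [Fintype.card_subtype]
    have hfilter : (z.filter (· ≤ m - 1)).sum
        = (∑ c ∈ S, c.support.card) + Fintype.card {x // g x = x} := by
      rw [hzdef]
      show ((g.cycleType + Multiset.replicate (Fintype.card {x // g x = x}) 1).filter
        (· ≤ m - 1)).sum = _
      rw [Multiset.filter_add, Multiset.sum_add]
      congr 1
      · rw [Equiv.Perm.cycleType_def, Multiset.filter_map, Finset.sum_eq_multiset_sum, hS,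
          Finset.filter_val]
        rfl
      · rw [Multiset.filter_eq_self.mpr, Multiset.sum_replicate, smul_eq_mul, mul_one]
        intro a ha
        rw [Multiset.eq_of_mem_replicate ha]
        omega
    rw [hfilter]
    omega
  -- finish
  intro i hi1 hi2
  by_cases hile : i ≤ m - 1
  · exact h i hi1 hile
  · apply isPartialSum_of_filter_sum i z
    intro t ht1 hti
    by_cases htm : t ≤ m - 1
    · exact filter_sum_ge_of_partialSum z t (h t ht1 htm)
    · have hmono : (z.filter (· ≤ m - 1)).sum ≤ (z.filter (· ≤ t)).sum := by
        apply multiset_sum_le_of_le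
        apply Multiset.monotone_filter_right
        intro b hb
        omega
      omega
end

section
/- Let n be a natural number, m a nontrivial divisor of n, and 1 ≤ i ≤ n/2. The permutation group S_m ≀ S_{n/m}, in its imprimitive action on n points (with n/m blocks of size m), contains an element whose cycle type is (i, n-i) if and only if m divides i or n/m divides i. -/
open Equiv Equiv.Perm Finset

def qmap (N d : ℕ) (hd : 0 < d) : Fin N → Fin d := fun a => ⟨a % d, Nat.mod_lt _ hd⟩

lemma qmap_rotate (N d : ℕ) (hd : 0 < d) (hdvd : d ∣ N) (a : Fin N) :
    qmap N d hd (finRotate N a) = finRotate d (qmap N d hd a) := by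
  rcases Nat.lt_or_ge d 2 with hd2 | hd2
  · have : d = 1 := by omega
    subst this
    exact Subsingleton.elim _ _
  have hN : 2 ≤ N := le_trans hd2 (Nat.le_of_dvd a.pos hdvd)
  obtain ⟨N', rfl⟩ : ∃ N', N = N' + 1 := ⟨N - 1, by omega⟩
  obtain ⟨d', rfl⟩ : ∃ d', d = d' + 1 := ⟨d - 1, by omega⟩
  rw [finRotate_succ_apply, finRotate_succ_apply]
  ext
  simp only [qmap, Fin.add_def, Fin.val_one']
  rw [Nat.mod_mod_of_dvd _ hdvd, Nat.one_mod_eq_one.mpr (by omega), Nat.mod_add_mod,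
    Nat.one_mod_eq_one.mpr (by omega)]

lemma card_qmap_fiber (N d : ℕ) (hd : 0 < d) (hdvd : d ∣ N) (j : Fin d) :
    Fintype.card {a : Fin N // qmap N d hd a = j} = N / d := by
  rw [← Fintype.card_fin (N / d)]
  apply Fintype.card_congr
  refine ⟨fun p => ⟨p.1.val / d, Nat.div_lt_div_of_lt_of_dvd hdvd p.1.isLt⟩,
    fun t => ⟨⟨t.val * d + j.val, ?_⟩, ?_⟩, ?_, ?_⟩
  · have h1 : t.val * d + d ≤ (N / d) * d := by
      have := t.isLt
      calc t.val * d + d = (t.val + 1) * d := by ring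
      _ ≤ (N / d) * d := Nat.mul_le_mul_right d (by omega)
    have : (N / d) * d = N := Nat.div_mul_cancel hdvd
    omega
  · ext
    simp only [qmap]
    rw [add_comm, Nat.add_mul_mod_self_right, Nat.mod_eq_of_lt j.isLt]
  · rintro ⟨⟨a, ha⟩, hq⟩
    ext
    simp only [qmap, Fin.mk.injEq] at hq ⊢
    rw [mul_comm, ← hq, Nat.div_add_mod]
  · rintro ⟨t, ht⟩
    ext
    simp only []
    rw [mul_comm, Nat.mul_add_div hd, Nat.div_eq_of_lt j.isLt, Nat.add_zero]


lemma mem_zpow_iff {α : Type*} [DecidableEq α] [Fintype α] (g : Equiv.Perm α) (S : Finset α)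
    (h : ∀ x, x ∈ S ↔ g x ∈ S) : ∀ t : ℤ, ∀ x, (x ∈ S ↔ (g ^ t) x ∈ S) := by
  intro t
  induction t using Int.induction_on with
  | zero => intro x; simp
  | succ k ih =>
      intro x
      rw [zpow_add_one, Equiv.Perm.mul_apply]
      exact (h x).trans (ih (g x))
  | pred k ih =>
      intro x
      rw [zpow_sub_one, Equiv.Perm.mul_apply]
      have hx : x ∈ S ↔ g⁻¹ x ∈ S := by rw [h (g⁻¹ x)]; simp
      exact hx.trans (ih (g⁻¹ x))



lemma orb_fullCycleType {α : Type*} [Fintype α] [DecidableEq α] (g : Equiv.Perm α)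
    (S T : Finset α) (hd : Disjoint S T) (hu : S ∪ T = Finset.univ)
    (hS1 : 1 ≤ S.card) (hT2 : 2 ≤ T.card)
    (hgS : ∀ x ∈ S, g x ∈ S) (hgT : ∀ x ∈ T, g x ∈ T)
    (hcS : ∀ x ∈ S, ∀ y ∈ S, g.SameCycle x y) (hcT : ∀ x ∈ T, ∀ y ∈ T, g.SameCycle x y) :
    fullCycleType g = {S.card, T.card} := by
  classical
  have hST : ∀ x : α, x ∈ S ∨ x ∈ T := by
    intro x
    have := Finset.mem_univ x
    rw [← hu, Finset.mem_union] at this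
    exact this
  have hiffT : ∀ x, x ∈ T ↔ g x ∈ T := by
    intro x
    refine ⟨hgT x, fun h => ?_⟩
    rcases hST x with hx | hx
    · exact absurd h (Finset.disjoint_left.mp hd (hgS x hx))
    · exact hx
  have hiffS : ∀ x, x ∈ S ↔ g x ∈ S := by
    intro x
    refine ⟨hgS x, fun h => ?_⟩
    rcases hST x with hx | hx
    · exact hx
    · exact absurd (hgT x hx) (Finset.disjoint_left.mp hd h)
  have hTsup : ∀ x ∈ T, x ∈ g.support := by
    intro x hx
    rw [Equiv.Perm.mem_support]
    intro hfix
    have hsub : T ⊆ {x} := by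
      intro y hy
      obtain ⟨t, ht⟩ := hcT x hx y hy
      rw [Finset.mem_singleton, ← ht, Equiv.Perm.zpow_apply_eq_self_of_apply_eq_self hfix]
    have := Finset.card_le_card hsub
    simp at this
    omega
  obtain ⟨x1, hx1⟩ := Finset.card_pos.mp (show 0 < T.card by omega)
  have hTsupp : (g.cycleOf x1).support = T := by
    ext y
    rw [Equiv.Perm.mem_support_cycleOf_iff]
    constructor
    · rintro ⟨⟨t, ht⟩, _⟩
      rw [← ht]
      exact (mem_zpow_iff g T hiffT t x1).mp hx1
    · intro hy
      exact ⟨hcT x1 hx1 y hy, hTsup x1 hx1⟩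
  have hc2mem : g.cycleOf x1 ∈ g.cycleFactorsFinset :=
    Equiv.Perm.cycleOf_mem_cycleFactorsFinset_iff.mpr (hTsup x1 hx1)
  rcases Nat.lt_or_ge S.card 2 with hS2 | hS2
  · -- S is a single fixed point
    have hScard : S.card = 1 := by omega
    obtain ⟨x0, hS0⟩ := Finset.card_eq_one.mp hScard
    have hx0fix : g x0 = x0 := by
      have := hgS x0 (by simp [hS0])
      rw [hS0, Finset.mem_singleton] at this
      exact this
    have hsupp : g.support = T := by
      ext x
      constructor
      · intro hx
        rcases hST x with h | h
        · rw [hS0, Finset.mem_singleton] at h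
          subst h
          exact absurd hx0fix (Equiv.Perm.mem_support.mp hx)
        · exact h
      · exact hTsup x
    have hfactors : g.cycleFactorsFinset = {g.cycleOf x1} := by
      ext c
      simp only [Finset.mem_singleton]
      constructor
      · intro hc
        have hcyc := (Equiv.Perm.mem_cycleFactorsFinset_iff.mp hc).1
        obtain ⟨z, hz⟩ := hcyc.nonempty_support
        have hzT : z ∈ T := by
          rw [← hsupp]
          exact Equiv.Perm.mem_cycleFactorsFinset_support_le hc hz
        rw [Equiv.Perm.cycle_is_cycleOf hz hc]
        exact ((hcT x1 hx1 z hzT).cycleOf_eq).symm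
      · rintro rfl
        exact hc2mem
    have hct : g.cycleType = {T.card} := by
      rw [Equiv.Perm.cycleType_def, hfactors]
      simp [hTsupp]
    have hfix : Fintype.card {x // g x = x} = 1 := by
      rw [Fintype.card_subtype]
      have : Finset.filter (fun x => g x = x) Finset.univ = S := by
        ext x
        simp only [Finset.mem_filter, Finset.mem_univ, true_and]
        constructor
        · intro hx
          rcases hST x with h | h
          · exact h
          · exact absurd hx (Equiv.Perm.mem_support.mp (hTsup x h))
        · intro hx
          rw [hS0, Finset.mem_singleton] at hx
          subst hx
          exact hx0fix
      rw [this, hScard]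
    rw [fullCycleType, hct, hfix, hScard]
    rw [Multiset.replicate_one]
    rw [show ({#T} + {1} : Multiset ℕ) = {#T, 1} from rfl, Multiset.pair_comm]
  · -- two nontrivial cycles
    have hSsup : ∀ x ∈ S, x ∈ g.support := by
      intro x hx
      rw [Equiv.Perm.mem_support]
      intro hfix
      have hsub : S ⊆ {x} := by
        intro y hy
        obtain ⟨t, ht⟩ := hcS x hx y hy
        rw [Finset.mem_singleton, ← ht, Equiv.Perm.zpow_apply_eq_self_of_apply_eq_self hfix]
      have := Finset.card_le_card hsub
      simp at this
      omega
    obtain ⟨x0, hx0⟩ := Finset.card_pos.mp (show 0 < S.card by omega)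
    have hSsupp : (g.cycleOf x0).support = S := by
      ext y
      rw [Equiv.Perm.mem_support_cycleOf_iff]
      constructor
      · rintro ⟨⟨t, ht⟩, _⟩
        rw [← ht]
        exact (mem_zpow_iff g S hiffS t x0).mp hx0
      · intro hy
        exact ⟨hcS x0 hx0 y hy, hSsup x0 hx0⟩
    have hc1mem : g.cycleOf x0 ∈ g.cycleFactorsFinset :=
      Equiv.Perm.cycleOf_mem_cycleFactorsFinset_iff.mpr (hSsup x0 hx0)
    have hne : g.cycleOf x0 ≠ g.cycleOf x1 := by
      intro h
      have : x0 ∈ (g.cycleOf x1).support := by rw [← h, hSsupp]; exact hx0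
      rw [hTsupp] at this
      exact Finset.disjoint_left.mp hd hx0 this
    have hfactors : g.cycleFactorsFinset = {g.cycleOf x0, g.cycleOf x1} := by
      ext c
      simp only [Finset.mem_insert, Finset.mem_singleton]
      constructor
      · intro hc
        have hcyc := (Equiv.Perm.mem_cycleFactorsFinset_iff.mp hc).1
        obtain ⟨z, hz⟩ := hcyc.nonempty_support
        have hzsup : z ∈ g.support := Equiv.Perm.mem_cycleFactorsFinset_support_le hc hz
        rcases hST z with h | h
        · left
          rw [Equiv.Perm.cycle_is_cycleOf hz hc]
          exact ((hcS x0 hx0 z h).cycleOf_eq).symm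
        · right
          rw [Equiv.Perm.cycle_is_cycleOf hz hc]
          exact ((hcT x1 hx1 z h).cycleOf_eq).symm
      · rintro (rfl | rfl)
        · exact hc1mem
        · exact hc2mem
    have hct : g.cycleType = {S.card, T.card} := by
      rw [Equiv.Perm.cycleType_def, hfactors]
      rw [Finset.insert_val_of_notMem (by simpa using hne)]
      simp [hSsupp, hTsupp]
    have hfix : Fintype.card {x // g x = x} = 0 := by
      rw [Fintype.card_subtype]
      rw [Finset.card_eq_zero]
      ext x
      simp only [Finset.mem_filter, Finset.mem_univ, true_and, Finset.notMem_empty,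
        iff_false]
      intro hx
      rcases hST x with h | h
      · exact Equiv.Perm.mem_support.mp (hSsup x h) hx
      · exact Equiv.Perm.mem_support.mp (hTsup x h) hx
    rw [fullCycleType, hct, hfix]
    simp

def congHom {α β : Type*} (e : α ≃ β) : Equiv.Perm α →* Equiv.Perm β where
  toFun p := e.permCongr p
  map_one' := e.permCongr_refl
  map_mul' p q := by
    ext x
    simp [Equiv.Perm.mul_apply]

lemma sameCycle_congr {α β : Type*} (e : α ≃ β) (p : Equiv.Perm α) {x y : α}
    (h : p.SameCycle x y) : (e.permCongr p).SameCycle (e x) (e y) := by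
  obtain ⟨t, ht⟩ := h
  refine ⟨t, ?_⟩
  have : (e.permCongr p) ^ t = congHom e (p ^ t) := by
    rw [map_zpow]; rfl
  rw [this]
  simp [congHom, ht]

lemma sameCycle_finRotate_all {N : ℕ} (a b : Fin N) : (finRotate N).SameCycle a b := by
  rcases Nat.lt_or_ge N 2 with h | h
  · have : a = b := by
      have := a.pos
      have hN : N = 1 := by omega
      subst hN
      exact Subsingleton.elim a b
    subst this
    exact Equiv.Perm.SameCycle.refl _ _
  · refine (isCycle_finRotate_of_le h).sameCycle ?_ ?_
    · exact Equiv.Perm.mem_support.mp (by rw [support_finRotate_of_le h]; exact Finset.mem_univ a)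
    · exact Equiv.Perm.mem_support.mp (by rw [support_finRotate_of_le h]; exact Finset.mem_univ b)

lemma sumCongr_zpow_apply_inl {A B : Type*} [DecidableEq A] [DecidableEq B]
    (p : Equiv.Perm A) (q : Equiv.Perm B) (t : ℤ) (a : A) :
    ((Equiv.sumCongr p q : Equiv.Perm (A ⊕ B)) ^ t) (Sum.inl a) = Sum.inl ((p ^ t) a) := by
  have h : (Equiv.sumCongr p q : Equiv.Perm (A ⊕ B)) ^ t =
      Equiv.Perm.sumCongrHom A B ((p, q) ^ t) := by
    rw [map_zpow]
    rfl
  rw [h]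
  rfl

lemma sumCongr_zpow_apply_inr {A B : Type*} [DecidableEq A] [DecidableEq B]
    (p : Equiv.Perm A) (q : Equiv.Perm B) (t : ℤ) (b : B) :
    ((Equiv.sumCongr p q : Equiv.Perm (A ⊕ B)) ^ t) (Sum.inr b) = Sum.inr ((q ^ t) b) := by
  have h : (Equiv.sumCongr p q : Equiv.Perm (A ⊕ B)) ^ t =
      Equiv.Perm.sumCongrHom A B ((p, q) ^ t) := by
    rw [map_zpow]
    rfl
  rw [h]
  rfl

lemma reverse_generic (n i kk m : ℕ) (hi1 : 1 ≤ i) (hni2 : 2 ≤ n - i) (hin : i + (n - i) = n)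
    (β0 : Fin i → Fin kk) (β1 : Fin (n - i) → Fin kk) (gB : Equiv.Perm (Fin kk))
    (hc0 : ∀ a, β0 (finRotate i a) = gB (β0 a))
    (hc1 : ∀ a, β1 (finRotate (n - i) a) = gB (β1 a))
    (hfib : ∀ j, Fintype.card {a : Fin i // β0 a = j} +
      Fintype.card {b : Fin (n - i) // β1 b = j} = m) :
    ∃ (g : Equiv.Perm (Fin n)) (B : Fin n → Fin kk),
      (∀ j, Fintype.card {x // B x = j} = m) ∧ (∀ x, B (g x) = gB (B x)) ∧
      fullCycleType g = {i, n - i} := by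
  classical
  let e : (Fin i ⊕ Fin (n - i)) ≃ Fin n := finSumFinEquiv.trans (finCongr hin)
  let c : Equiv.Perm (Fin i ⊕ Fin (n - i)) := Equiv.sumCongr (finRotate i) (finRotate (n - i))
  refine ⟨e.permCongr c, fun x => Sum.elim β0 β1 (e.symm x), ?_, ?_, ?_⟩
  · intro j
    have e1 : {x : Fin n // Sum.elim β0 β1 (e.symm x) = j} ≃
        {z : Fin i ⊕ Fin (n - i) // Sum.elim β0 β1 z = j} :=
      Equiv.subtypeEquiv e.symm (fun x => Iff.rfl)
    rw [Fintype.card_congr (e1.trans (Equiv.subtypeSum)), Fintype.card_sum]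
    exact hfib j
  · intro x
    show Sum.elim β0 β1 (e.symm (e.permCongr c x)) = gB (Sum.elim β0 β1 (e.symm x))
    rw [Equiv.permCongr_apply, Equiv.symm_apply_apply]
    rcases h : e.symm x with a | b
    · show Sum.elim β0 β1 (Sum.inl (finRotate i a)) = gB (Sum.elim β0 β1 (Sum.inl a))
      exact hc0 a
    · show Sum.elim β0 β1 (Sum.inr (finRotate (n - i) b)) = gB (Sum.elim β0 β1 (Sum.inr b))
      exact hc1 b
  · set S : Finset (Fin n) := Finset.univ.image (fun a : Fin i => e (Sum.inl a)) with hSdef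
    set T : Finset (Fin n) := Finset.univ.image (fun b : Fin (n - i) => e (Sum.inr b)) with hTdef
    have hinjS : Function.Injective (fun a : Fin i => e (Sum.inl a)) := by
      intro a a' h
      exact Sum.inl_injective (e.injective h)
    have hinjT : Function.Injective (fun b : Fin (n - i) => e (Sum.inr b)) := by
      intro b b' h
      exact Sum.inr_injective (e.injective h)
    have hScard : S.card = i := by
      rw [hSdef, Finset.card_image_of_injective _ hinjS, Finset.card_univ, Fintype.card_fin]
    have hTcard : T.card = n - i := by
      rw [hTdef, Finset.card_image_of_injective _ hinjT, Finset.card_univ, Fintype.card_fin]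
    have hd : Disjoint S T := by
      rw [Finset.disjoint_left]
      rintro x hx hx'
      obtain ⟨a, _, rfl⟩ := Finset.mem_image.mp hx
      obtain ⟨b, _, hb⟩ := Finset.mem_image.mp hx'
      exact absurd (e.injective hb) (by simp)
    have hu : S ∪ T = Finset.univ := by
      apply Finset.eq_univ_of_forall
      intro x
      rw [Finset.mem_union]
      rcases h : e.symm x with a | b
      · left
        rw [hSdef, Finset.mem_image]
        exact ⟨a, Finset.mem_univ a, by rw [← h, Equiv.apply_symm_apply]⟩
      · right
        rw [hTdef, Finset.mem_image]
        exact ⟨b, Finset.mem_univ b, by rw [← h, Equiv.apply_symm_apply]⟩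
    have happly : ∀ z, e.permCongr c (e z) = e (c z) := by
      intro z
      rw [Equiv.permCongr_apply, Equiv.symm_apply_apply]
    have hgS : ∀ x ∈ S, e.permCongr c x ∈ S := by
      intro x hx
      obtain ⟨a, _, rfl⟩ := Finset.mem_image.mp hx
      rw [happly]
      exact Finset.mem_image.mpr ⟨finRotate i a, Finset.mem_univ _, rfl⟩
    have hgT : ∀ x ∈ T, e.permCongr c x ∈ T := by
      intro x hx
      obtain ⟨b, _, rfl⟩ := Finset.mem_image.mp hx
      rw [happly]
      exact Finset.mem_image.mpr ⟨finRotate (n - i) b, Finset.mem_univ _, rfl⟩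
    have hcS : ∀ x ∈ S, ∀ y ∈ S, (e.permCongr c).SameCycle x y := by
      intro x hx y hy
      obtain ⟨a, _, rfl⟩ := Finset.mem_image.mp hx
      obtain ⟨a', _, rfl⟩ := Finset.mem_image.mp hy
      apply sameCycle_congr
      obtain ⟨t, ht⟩ := sameCycle_finRotate_all a a'
      exact ⟨t, by rw [sumCongr_zpow_apply_inl, ht]⟩
    have hcT : ∀ x ∈ T, ∀ y ∈ T, (e.permCongr c).SameCycle x y := by
      intro x hx y hy
      obtain ⟨b, _, rfl⟩ := Finset.mem_image.mp hx
      obtain ⟨b', _, rfl⟩ := Finset.mem_image.mp hy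
      apply sameCycle_congr
      obtain ⟨t, ht⟩ := sameCycle_finRotate_all b b'
      exact ⟨t, by rw [sumCongr_zpow_apply_inr, ht]⟩
    have := orb_fullCycleType (e.permCongr c) S T hd hu (by omega) (by omega) hgS hgT hcS hcT
    rw [this, hScard, hTcard]


lemma factor_support_props {α : Type*} [Fintype α] [DecidableEq α] {g c : Equiv.Perm α}
    (hc : c ∈ g.cycleFactorsFinset) :
    (∀ x ∈ c.support, g x ∈ c.support) ∧ (∀ x ∈ c.support, ∀ y ∈ c.support, g.SameCycle x y) := by
  classical
  have key : ∀ x ∈ c.support, c.support = (g.cycleOf x).support ∧ x ∈ g.support := by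
    intro x hx
    exact ⟨by rw [← Equiv.Perm.cycle_is_cycleOf hx hc],
      Equiv.Perm.mem_cycleFactorsFinset_support_le hc hx⟩
  constructor
  · intro x hx
    obtain ⟨hsupp, hxg⟩ := key x hx
    rw [hsupp]
    exact Equiv.Perm.mem_support_cycleOf_iff.mpr ⟨⟨1, by simp⟩, hxg⟩
  · intro x hx y hy
    obtain ⟨hsupp, hxg⟩ := key x hx
    rw [hsupp] at hy
    exact (Equiv.Perm.mem_support_cycleOf_iff.mp hy).1

lemma dec_of_fullCycleType {α : Type*} [Fintype α] [DecidableEq α] (g : Equiv.Perm α)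
    (a b : ℕ) (ha : 1 ≤ a) (hb : 2 ≤ b) (hcard : Fintype.card α = a + b)
    (hf : fullCycleType g = {a, b}) :
    ∃ S T : Finset α, Disjoint S T ∧ S ∪ T = Finset.univ ∧ S.card = a ∧ T.card = b ∧
      (∀ x ∈ S, g x ∈ S) ∧ (∀ x ∈ T, g x ∈ T) ∧
      (∀ x ∈ S, ∀ y ∈ S, g.SameCycle x y) ∧ (∀ x ∈ T, ∀ y ∈ T, g.SameCycle x y) := by
  classical
  rw [fullCycleType] at hf
  set f := Fintype.card {x // g x = x} with hfdef
  have hone : Multiset.count 1 g.cycleType = 0 := by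
    rw [Multiset.count_eq_zero]
    intro h
    have := Equiv.Perm.two_le_of_mem_cycleType h
    omega
  rcases Nat.lt_or_ge a 2 with ha2 | ha2
  · -- a = 1 : one fixed point and one b-cycle
    have ha1 : a = 1 := by omega
    subst ha1
    have hcount := congrArg (Multiset.count 1) hf
    rw [Multiset.count_add, hone, Multiset.count_replicate] at hcount
    have hb1 : (1 : ℕ) ≠ b := by omega
    have hcount2 : Multiset.count 1 ({1, b} : Multiset ℕ) = 1 := by
      rw [Multiset.insert_eq_cons, Multiset.count_cons_self, Multiset.count_singleton,
        if_neg hb1]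
    have hcount' : f = 1 := by simpa [Multiset.count_singleton, hb1] using hcount
    rw [hcount'] at hf
    have hct : g.cycleType = {b} := by
      have h1 : (1 : ℕ) ::ₘ g.cycleType = 1 ::ₘ {b} := by
        rw [Multiset.replicate_one, add_comm, Multiset.singleton_add] at hf
        rw [hf]
        rfl
      exact (Multiset.cons_inj_right 1).mp h1
    obtain ⟨c, hcval, hcsupp⟩ := Multiset.map_eq_singleton.mp hct
    simp only [Function.comp_apply] at hcsupp
    have hcmem : c ∈ g.cycleFactorsFinset := by
      rw [Finset.mem_def, hcval]
      exact Multiset.mem_singleton_self c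
    obtain ⟨hcfwd, hccyc⟩ := factor_support_props hcmem
    refine ⟨Finset.univ \ c.support, c.support, Finset.sdiff_disjoint, ?_, ?_, hcsupp, ?_, hcfwd,
      ?_, hccyc⟩
    · rw [Finset.sdiff_union_self_eq_union]
      simp
    · rw [Finset.card_sdiff_of_subset (Finset.subset_univ _), Finset.card_univ, hcard, hcsupp]
      omega
    · intro x hx
      simp only [Finset.mem_sdiff, Finset.mem_univ, true_and] at hx ⊢
      intro hgx
      apply hx
      have h1 : c.support = (g.cycleOf (g x)).support := by
        rw [← Equiv.Perm.cycle_is_cycleOf hgx hcmem]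
      rw [h1] at hgx ⊢
      rw [Equiv.Perm.mem_support_cycleOf_iff] at hgx ⊢
      refine ⟨(⟨-1, by simp⟩ : g.SameCycle (g x) x), hgx.2⟩
    · intro x hx y hy
      have hcard1 : (Finset.univ \ c.support).card = 1 := by
        rw [Finset.card_sdiff_of_subset (Finset.subset_univ _), Finset.card_univ, hcard, hcsupp]
        omega
      obtain ⟨z, hz⟩ := Finset.card_eq_one.mp hcard1
      rw [hz, Finset.mem_singleton] at hx hy
      subst hx; subst hy
      exact ⟨0, by simp⟩
  · -- a ≥ 2 : two cycles
    have hf0 : f = 0 := by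
      have hcount := congrArg (Multiset.count 1) hf
      rw [Multiset.count_add, hone, Multiset.count_replicate] at hcount
      have h0 : Multiset.count 1 ({a, b} : Multiset ℕ) = 0 := by
        rw [Multiset.insert_eq_cons, Multiset.count_cons_of_ne (by omega),
          Multiset.count_singleton, if_neg (by omega : (1:ℕ) ≠ b)]
      simpa [Multiset.count_cons, Multiset.count_singleton,
        show (1:ℕ) ≠ a by omega, show (1:ℕ) ≠ b by omega] using hcount
    rw [hf0, Multiset.replicate_zero, add_zero] at hf
    rw [Equiv.Perm.cycleType_def, Multiset.insert_eq_cons] at hf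
    obtain ⟨c1, hc1mem', hc1supp, hrest⟩ := (Multiset.map_eq_cons _ _ _ _).mpr hf
    simp only [Function.comp_apply] at hc1supp
    obtain ⟨c2, hc2val, hc2supp⟩ := Multiset.map_eq_singleton.mp hrest
    simp only [Function.comp_apply] at hc2supp
    have hc2mem' : c2 ∈ g.cycleFactorsFinset.val.erase c1 := by
      rw [hc2val]; exact Multiset.mem_singleton_self c2
    have hne : c1 ≠ c2 := by
      intro h
      subst h
      have hnodup := g.cycleFactorsFinset.nodup
      exact (Multiset.Nodup.notMem_erase hnodup) hc2mem'
    have hc2mem : c2 ∈ g.cycleFactorsFinset := by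
      rw [Finset.mem_def]
      exact Multiset.mem_of_mem_erase hc2mem'
    have hc1mem : c1 ∈ g.cycleFactorsFinset := hc1mem'
    have hdisj : Disjoint c1.support c2.support := by
      have := g.cycleFactorsFinset_pairwise_disjoint hc1mem hc2mem hne
      exact Equiv.Perm.Disjoint.disjoint_support this
    obtain ⟨h1fwd, h1cyc⟩ := factor_support_props hc1mem
    obtain ⟨h2fwd, h2cyc⟩ := factor_support_props hc2mem
    refine ⟨c1.support, c2.support, hdisj, ?_, hc1supp, hc2supp, h1fwd, h2fwd, h1cyc, h2cyc⟩
    apply Finset.eq_univ_of_card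
    rw [Finset.card_union_of_disjoint hdisj, hc1supp, hc2supp, hcard]

lemma equivariant_zpow {α β : Type*} (g : Equiv.Perm α) (gB : Equiv.Perm β) (B : α → β)
    (heq : ∀ x, B (g x) = gB (B x)) : ∀ t : ℤ, ∀ x, B ((g ^ t) x) = (gB ^ t) (B x) := by
  intro t
  induction t using Int.induction_on with
  | zero => intro x; simp
  | succ k ih =>
      intro x
      rw [zpow_add_one, zpow_add_one, Equiv.Perm.mul_apply, Equiv.Perm.mul_apply,
        ih (g x), heq x]
  | pred k ih =>
      intro x
      have hinv : ∀ y, B (g⁻¹ y) = gB⁻¹ (B y) := by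
        intro y
        have := heq (g⁻¹ y)
        rw [show g (g⁻¹ y) = y from g.apply_symm_apply y] at this
        rw [this]; exact (gB.symm_apply_apply _).symm
      rw [zpow_sub_one, zpow_sub_one, Equiv.Perm.mul_apply, Equiv.Perm.mul_apply,
        ih (g⁻¹ x), hinv x]

section Forward

variable {n k : ℕ} (g : Equiv.Perm (Fin n)) (B : Fin n → Fin k) (gB : Equiv.Perm (Fin k))

lemma fiber_card_const (heq : ∀ x, B (g x) = gB (B x)) (S : Finset (Fin n))
    (hiffS : ∀ x, x ∈ S ↔ g x ∈ S)
    (hcS : ∀ x ∈ S, ∀ y ∈ S, g.SameCycle x y)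
    {x y : Fin n} (hx : x ∈ S) (hy : y ∈ S) :
    (S.filter (fun z => B z = B x)).card = (S.filter (fun z => B z = B y)).card := by
  obtain ⟨t, ht⟩ := hcS x hx y hy
  have hEQ := equivariant_zpow g gB B heq
  apply Finset.card_bij' (fun z _ => (g ^ t) z) (fun z _ => (g ^ (-t)) z)
  · intro z hz
    rw [Finset.mem_filter] at hz ⊢
    refine ⟨(mem_zpow_iff g S hiffS t z).mp hz.1, ?_⟩
    rw [hEQ t z, hz.2, ← hEQ t x, ht]
  · intro z hz
    rw [Finset.mem_filter] at hz ⊢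
    refine ⟨(mem_zpow_iff g S hiffS (-t) z).mp hz.1, ?_⟩
    rw [hEQ (-t) z, hz.2, ← ht, hEQ t x]
    simp [← Equiv.Perm.mul_apply, ← zpow_add]
  · intro z _
    simp [← Equiv.Perm.mul_apply, ← zpow_add]
  · intro z _
    show (g ^ t * g ^ (-t)) z = z
    rw [← zpow_add, add_neg_cancel, zpow_zero, Equiv.Perm.one_apply]

lemma orbit_card_eq (heq : ∀ x, B (g x) = gB (B x)) (S : Finset (Fin n))
    (hiffS : ∀ x, x ∈ S ↔ g x ∈ S)
    (hcS : ∀ x ∈ S, ∀ y ∈ S, g.SameCycle x y)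
    {x0 : Fin n} (hx0 : x0 ∈ S) :
    S.card = (S.image B).card * (S.filter (fun z => B z = B x0)).card := by
  rw [Finset.card_eq_sum_card_fiberwise (fun x hx => Finset.mem_image_of_mem B hx)]
  rw [Finset.sum_congr rfl (fun j hj => ?_), Finset.sum_const, smul_eq_mul]
  obtain ⟨y, hy, rfl⟩ := Finset.mem_image.mp hj
  exact fiber_card_const g B gB heq S hiffS hcS hy hx0

end Forward

lemma forward_dir (n m i : ℕ) (hmn : m ∣ n) (hm1 : 1 < m) (hm2 : m < n)
    (hi1 : 1 ≤ i) (hi2 : i ≤ n / 2)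
    (g : Equiv.Perm (Fin n)) (B : Fin n → Fin (n / m)) (gB : Equiv.Perm (Fin (n / m)))
    (hB : ∀ j, Fintype.card {x // B x = j} = m) (heq : ∀ x, B (g x) = gB (B x))
    (hft : fullCycleType g = {i, n - i}) : m ∣ i ∨ (n / m) ∣ i := by
  classical
  have hm0 : 0 < m := by omega
  have hk : m * (n / m) = n := Nat.mul_div_cancel' hmn
  have hk2 : 2 ≤ n / m := by
    rcases Nat.lt_or_ge (n / m) 2 with h | h
    · interval_cases h' : (n / m) <;> omega
    · exact h
  have h2m : 2 * m ≤ n := by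
    have := Nat.mul_le_mul_left m hk2
    omega
  have hm_le : m ≤ n / 2 := (Nat.le_div_iff_mul_le (by norm_num)).mpr (by omega)
  have hni : 2 ≤ n - i := by omega
  obtain ⟨S, T, hd, hu, hScard, hTcard, hgS, hgT, hcS, hcT⟩ :=
    dec_of_fullCycleType g i (n - i) hi1 hni (by rw [Fintype.card_fin]; omega) hft
  have hST : ∀ x, x ∈ S ∨ x ∈ T := by
    intro x
    have := Finset.mem_univ x
    rw [← hu, Finset.mem_union] at this
    exact this
  have hiffT : ∀ x, x ∈ T ↔ g x ∈ T := by
    intro x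
    refine ⟨hgT x, fun h => ?_⟩
    rcases hST x with hx | hx
    · exact absurd h (Finset.disjoint_left.mp hd (hgS x hx))
    · exact hx
  have hiffS : ∀ x, x ∈ S ↔ g x ∈ S := by
    intro x
    refine ⟨hgS x, fun h => ?_⟩
    rcases hST x with hx | hx
    · exact hx
    · exact absurd (hgT x hx) (Finset.disjoint_left.mp hd h)
  obtain ⟨x0, hx0⟩ := Finset.card_pos.mp (show 0 < S.card by omega)
  obtain ⟨x1, hx1⟩ := Finset.card_pos.mp (show 0 < T.card by omega)
  have hfib : ∀ j, (Finset.univ.filter fun z => B z = j).card = m := by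
    intro j
    rw [← Fintype.card_subtype]
    exact hB j
  have hsplit : ∀ j, (S.filter fun z => B z = j).card + (T.filter fun z => B z = j).card = m := by
    intro j
    calc (S.filter fun z => B z = j).card + (T.filter fun z => B z = j).card
        = ((S ∪ T).filter fun z => B z = j).card := by
          rw [Finset.filter_union,
            Finset.card_union_of_disjoint (Finset.disjoint_filter_filter hd)]
      _ = m := by rw [hu]; exact hfib j
  have hSeq := orbit_card_eq g B gB heq S hiffS hcS hx0
  have hTeq := orbit_card_eq g B gB heq T hiffT hcT hx1
  by_cases hover : ∃ j, j ∈ S.image B ∧ j ∈ T.image B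
  · right
    obtain ⟨j0, hj0S, hj0T⟩ := hover
    obtain ⟨xs, hxs, hxsB⟩ := Finset.mem_image.mp hj0S
    obtain ⟨xt, hxt, hxtB⟩ := Finset.mem_image.mp hj0T
    have hEQ := equivariant_zpow g gB B heq
    have him : S.image B = T.image B := by
      ext j
      simp only [Finset.mem_image]
      constructor
      · rintro ⟨x, hx, rfl⟩
        obtain ⟨t, ht⟩ := hcS xs hxs x hx
        exact ⟨(g ^ t) xt, (mem_zpow_iff g T hiffT t xt).mp hxt,
          by rw [hEQ t xt, hxtB, ← hxsB, ← hEQ t xs, ht]⟩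
      · rintro ⟨x, hx, rfl⟩
        obtain ⟨t, ht⟩ := hcT xt hxt x hx
        exact ⟨(g ^ t) xs, (mem_zpow_iff g S hiffS t xs).mp hxs,
          by rw [hEQ t xs, hxsB, ← hxtB, ← hEQ t xt, ht]⟩
    have hvT : (T.filter fun z => B z = B x0).card = (T.filter fun z => B z = B x1).card := by
      have hmem : B x0 ∈ T.image B := by
        rw [← him]
        exact Finset.mem_image_of_mem B hx0
      obtain ⟨y, hy, hyB⟩ := Finset.mem_image.mp hmem
      rw [← hyB]
      exact fiber_card_const g B gB heq T hiffT hcT hy hx1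
    have hmu : (S.filter fun z => B z = B x0).card + (T.filter fun z => B z = B x1).card = m := by
      rw [← hvT]
      exact hsplit (B x0)
    have hdT : (T.image B).card = (S.image B).card := by rw [← him]
    rw [hdT] at hTeq
    have hdSm : (S.image B).card * m = n := by
      have h2 : (S.image B).card *
          ((S.filter fun z => B z = B x0).card + (T.filter fun z => B z = B x1).card) = n := by
        rw [Nat.mul_add, ← hSeq, ← hTeq, hScard, hTcard]
        omega
      rw [hmu] at h2
      exact h2
    have hdSk : (S.image B).card = n / m := by
      have h' : m * (S.image B).card = m * (n / m) := by
        rw [mul_comm m ((S.image B).card), hdSm, hk]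
      exact Nat.eq_of_mul_eq_mul_left hm0 h'
    rw [← hScard, hSeq, hdSk]
    exact dvd_mul_right _ _
  · left
    push_neg at hover
    have hempty : (T.filter fun z => B z = B x0) = ∅ := by
      rw [Finset.filter_eq_empty_iff]
      intro z hz hB0
      exact hover (B x0) (Finset.mem_image_of_mem B hx0) (Finset.mem_image.mpr ⟨z, hz, hB0⟩)
    have hum : (S.filter fun z => B z = B x0).card = m := by
      have := hsplit (B x0)
      rw [hempty] at this
      simpa using this
    rw [← hScard, hSeq, hum]
    exact dvd_mul_left _ _

/-- For `m` a nontrivial divisor of `n` and `1 ≤ i ≤ n/2`, the imprimitive wreath product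
`S_m ≀ S_{n/m}` (permutations preserving some partition of the `n` points into `n/m`
blocks of size `m`) contains an element of cycle type `(i, n-i)` if and only if
`m ∣ i` or `(n/m) ∣ i`. -/
theorem wreath_contains_two_cycle_type_iff (n m i : ℕ) (hmn : m ∣ n) (hm1 : 1 < m)
    (hm2 : m < n) (hi1 : 1 ≤ i) (hi2 : i ≤ n / 2) :
    (∃ (g : Equiv.Perm (Fin n)) (B : Fin n → Fin (n / m))
        (gB : Equiv.Perm (Fin (n / m))),
        (∀ j, Fintype.card {x // B x = j} = m) ∧ (∀ x, B (g x) = gB (B x)) ∧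
        fullCycleType g = {i, n - i}) ↔ (m ∣ i ∨ (n / m) ∣ i) := by
  have hm0 : 0 < m := by omega
  have hk : m * (n / m) = n := Nat.mul_div_cancel' hmn
  have hk2 : 2 ≤ n / m := by
    rcases Nat.lt_or_ge (n / m) 2 with h | h
    · interval_cases h' : (n / m) <;> omega
    · exact h
  have h2m : 2 * m ≤ n := by
    have := Nat.mul_le_mul_left m hk2
    omega
  have hm_le : m ≤ n / 2 := (Nat.le_div_iff_mul_le (by norm_num)).mpr (by omega)
  have hni2 : 2 ≤ n - i := by omega
  have hin : i + (n - i) = n := by omega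
  constructor
  · rintro ⟨g, B, gB, hB, heq, hft⟩
    exact forward_dir n m i hmn hm1 hm2 hi1 hi2 g B gB hB heq hft
  · intro h
    rcases h with hdvd | hdvd
    · -- m ∣ i
      have hdvd' : m ∣ (n - i) := Nat.dvd_sub hmn hdvd
      have hd1 : m * (i / m) = i := Nat.mul_div_cancel' hdvd
      have hd2 : m * ((n - i) / m) = n - i := Nat.mul_div_cancel' hdvd'
      have hd1pos : 0 < i / m := by
        rcases Nat.eq_zero_or_pos (i / m) with h0 | h0
        · rw [h0, Nat.mul_zero] at hd1; omega
        · exact h0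
      have hd2pos : 0 < (n - i) / m := by
        rcases Nat.eq_zero_or_pos ((n - i) / m) with h0 | h0
        · rw [h0, Nat.mul_zero] at hd2; omega
        · exact h0
      have hd1dvd : (i / m) ∣ i := Nat.div_dvd_of_dvd hdvd
      have hd2dvd : ((n - i) / m) ∣ (n - i) := Nat.div_dvd_of_dvd hdvd'
      have hd12 : i / m + (n - i) / m = n / m := by
        have h' : m * (i / m + (n - i) / m) = m * (n / m) := by
          rw [Nat.mul_add, hd1, hd2, hk]; omega
        exact Nat.eq_of_mul_eq_mul_left hm0 h'
      have hidiv : i / (i / m) = m := Nat.div_div_self hdvd (by omega)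
      have hnidiv : (n - i) / ((n - i) / m) = m := Nat.div_div_self hdvd' (by omega)
      set eK : (Fin (i / m) ⊕ Fin ((n - i) / m)) ≃ Fin (n / m) :=
        finSumFinEquiv.trans (finCongr hd12) with heK
      set cK : Equiv.Perm (Fin (i / m) ⊕ Fin ((n - i) / m)) :=
        Equiv.sumCongr (finRotate (i / m)) (finRotate ((n - i) / m)) with hcK
      obtain ⟨g, B, h1, h2, h3⟩ := reverse_generic n i (n / m) m hi1 hni2 hin
        (fun a => eK (Sum.inl (qmap i (i / m) hd1pos a)))
        (fun b => eK (Sum.inr (qmap (n - i) ((n - i) / m) hd2pos b)))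
        (eK.permCongr cK)
        (by
          intro a
          show eK (Sum.inl (qmap i (i / m) hd1pos (finRotate i a))) =
            (eK.permCongr cK) (eK (Sum.inl (qmap i (i / m) hd1pos a)))
          rw [qmap_rotate i (i / m) hd1pos hd1dvd a, Equiv.permCongr_apply,
            Equiv.symm_apply_apply]
          rfl)
        (by
          intro b
          show eK (Sum.inr (qmap (n - i) ((n - i) / m) hd2pos (finRotate (n - i) b))) =
            (eK.permCongr cK) (eK (Sum.inr (qmap (n - i) ((n - i) / m) hd2pos b)))
          rw [qmap_rotate (n - i) ((n - i) / m) hd2pos hd2dvd b, Equiv.permCongr_apply,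
            Equiv.symm_apply_apply]
          rfl)
        (by
          intro j
          rcases hw : eK.symm j with j1 | j2
          · have hcard1 : Fintype.card {a : Fin i //
                eK (Sum.inl (qmap i (i / m) hd1pos a)) = j} = m := by
              have heqv : {a : Fin i // eK (Sum.inl (qmap i (i / m) hd1pos a)) = j} ≃
                  {a : Fin i // qmap i (i / m) hd1pos a = j1} := by
                apply Equiv.subtypeEquivRight
                intro a
                rw [← Equiv.eq_symm_apply, hw, Sum.inl.injEq]
              rw [Fintype.card_congr heqv, card_qmap_fiber i (i / m) hd1pos hd1dvd j1, hidiv]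
            have hcard2 : Fintype.card {b : Fin (n - i) //
                eK (Sum.inr (qmap (n - i) ((n - i) / m) hd2pos b)) = j} = 0 := by
              rw [Fintype.card_eq_zero_iff]
              refine ⟨fun p => ?_⟩
              have := p.2
              rw [← Equiv.eq_symm_apply, hw] at this
              cases this
            rw [hcard1, hcard2]
            omega
          · have hcard1 : Fintype.card {a : Fin i //
                eK (Sum.inl (qmap i (i / m) hd1pos a)) = j} = 0 := by
              rw [Fintype.card_eq_zero_iff]
              refine ⟨fun p => ?_⟩
              have := p.2
              rw [← Equiv.eq_symm_apply, hw] at this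
              cases this
            have hcard2 : Fintype.card {b : Fin (n - i) //
                eK (Sum.inr (qmap (n - i) ((n - i) / m) hd2pos b)) = j} = m := by
              have heqv : {b : Fin (n - i) //
                  eK (Sum.inr (qmap (n - i) ((n - i) / m) hd2pos b)) = j} ≃
                  {b : Fin (n - i) // qmap (n - i) ((n - i) / m) hd2pos b = j2} := by
                apply Equiv.subtypeEquivRight
                intro b
                rw [← Equiv.eq_symm_apply, hw, Sum.inr.injEq]
              rw [Fintype.card_congr heqv,
                card_qmap_fiber (n - i) ((n - i) / m) hd2pos hd2dvd j2, hnidiv]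
            rw [hcard1, hcard2]
            omega)
      exact ⟨g, B, eK.permCongr cK, h1, h2, h3⟩
    · -- (n / m) ∣ i
      have hkdvd_n : (n / m) ∣ n := Nat.div_dvd_of_dvd hmn
      have hdvd' : (n / m) ∣ (n - i) := Nat.dvd_sub hkdvd_n hdvd
      have hkpos : 0 < n / m := by omega
      obtain ⟨g, B, h1, h2, h3⟩ := reverse_generic n i (n / m) m hi1 hni2 hin
        (qmap i (n / m) hkpos) (qmap (n - i) (n / m) hkpos) (finRotate (n / m))
        (fun a => qmap_rotate i (n / m) hkpos hdvd a)
        (fun b => qmap_rotate (n - i) (n / m) hkpos hdvd' b)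
        (by
          intro j
          rw [card_qmap_fiber i (n / m) hkpos hdvd j,
            card_qmap_fiber (n - i) (n / m) hkpos hdvd' j]
          obtain ⟨s, hs⟩ := hdvd
          obtain ⟨u, hu⟩ := hdvd'
          have h1 : i / (n / m) = s := by rw [hs, Nat.mul_div_cancel_left _ hkpos]
          have h2 : (n - i) / (n / m) = u := by rw [hu, Nat.mul_div_cancel_left _ hkpos]
          rw [h1, h2]
          have hsum : (n / m) * (s + u) = (n / m) * m := by
            rw [Nat.mul_add, ← hs, ← hu, mul_comm (n / m) m, hk]
            omega
          exact Nat.eq_of_mul_eq_mul_left hkpos hsum)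
      exact ⟨g, B, finRotate (n / m), h1, h2, h3⟩
end

section
/- Let n be odd and let 2 ≤ i ≤ (n-1)/2 be coprime with n. Then the cycle type (i, i, n - 2i) is not contained in any imprimitive wreath product S_m ≀ S_{n/m} (m a nontrivial divisor of n) acting on n points. That is, no element of S_n with cycle type (i, i, n-2i) preserves a nontrivial partition of {1, ..., n} into blocks of equal size. -/
namespace CTIhelp

open Finset

variable {α : Type*} [Fintype α] [DecidableEq α]

/-- The orbit of a point under a permutation, as a `Finset`. -/
def orb (g : Equiv.Perm α) (x : α) : Finset α :=
  Finset.univ.filter (fun y => g.SameCycle x y)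

lemma mem_orb {g : Equiv.Perm α} {x y : α} : y ∈ orb g x ↔ g.SameCycle x y := by
  simp [orb]

lemma self_mem_orb (g : Equiv.Perm α) (x : α) : x ∈ orb g x :=
  mem_orb.mpr (Equiv.Perm.SameCycle.refl _ _)

lemma orb_eq_of_sameCycle {g : Equiv.Perm α} {x y : α} (h : g.SameCycle x y) :
    orb g x = orb g y := by
  ext z; simp only [mem_orb]
  exact ⟨fun hz => h.symm.trans hz, fun hz => h.trans hz⟩

lemma orb_eq_of_fixed {g : Equiv.Perm α} {x : α} (h : g x = x) : orb g x = {x} := by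
  ext z; simp only [mem_orb, Finset.mem_singleton]
  constructor
  · rintro ⟨t, rfl⟩
    exact Equiv.Perm.zpow_apply_eq_self_of_apply_eq_self h t
  · rintro rfl; exact Equiv.Perm.SameCycle.refl _ _

lemma orb_eq_support_cycleOf {g : Equiv.Perm α} {x : α} (h : g x ≠ x) :
    orb g x = (g.cycleOf x).support := by
  ext z; rw [mem_orb, Equiv.Perm.mem_support_cycleOf_iff' h]

lemma pow_card_orb (g : Equiv.Perm α) (x : α) : (g ^ (orb g x).card) x = x := by
  by_cases h : g x = x
  · exact Equiv.Perm.pow_apply_eq_self_of_apply_eq_self h _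
  · rw [orb_eq_support_cycleOf h, ← Equiv.Perm.cycleOf_pow_apply_self,
      ← (Equiv.Perm.isCycle_cycleOf g h).orderOf, pow_orderOf_eq_one, Equiv.Perm.one_apply]

lemma card_orb_dvd {g : Equiv.Perm α} {x : α} {t : ℕ} (ht : (g ^ t) x = x) :
    (orb g x).card ∣ t := by
  by_cases h : g x = x
  · rw [orb_eq_of_fixed h]; simp
  · rw [orb_eq_support_cycleOf h, ← (Equiv.Perm.isCycle_cycleOf g h).orderOf]
    apply orderOf_dvd_of_pow_eq_one
    have hx : (g.cycleOf x) x ≠ x := by rwa [Equiv.Perm.cycleOf_apply_self]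
    rw [(Equiv.Perm.isCycle_cycleOf g h).pow_eq_one_iff' hx]
    rw [Equiv.Perm.cycleOf_pow_apply_self]; exact ht

lemma card_orb_mem_cycleType {g : Equiv.Perm α} {x : α} (h : g x ≠ x) :
    (orb g x).card ∈ g.cycleType := by
  rw [orb_eq_support_cycleOf h, Equiv.Perm.cycleType_def]
  exact Multiset.mem_map_of_mem _
    (Equiv.Perm.cycleOf_mem_cycleFactorsFinset_iff.mpr (Equiv.Perm.mem_support.mpr h))

lemma dvd_card_of_orbit_closed (g : Equiv.Perm α) (S : Finset α) (v : ℕ)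
    (hcl : ∀ x ∈ S, orb g x ⊆ S) (hv : ∀ x ∈ S, (orb g x).card = v) : v ∣ S.card := by
  rw [Finset.card_eq_sum_card_image (fun x => orb g x) S]
  apply Finset.dvd_sum
  intro t ht
  obtain ⟨x, hxS, rfl⟩ := Finset.mem_image.mp ht
  have hfe : S.filter (fun y => orb g y = orb g x) = orb g x := by
    ext y; constructor
    · intro hy
      obtain ⟨hyS, hyo⟩ := Finset.mem_filter.mp hy
      have : y ∈ orb g y := self_mem_orb g y
      rwa [hyo] at this
    · intro hy
      exact Finset.mem_filter.mpr ⟨hcl x hxS hy, (orb_eq_of_sameCycle (mem_orb.mp hy)).symm⟩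
  rw [hfe, hv x hxS]

end CTIhelp

open CTIhelp Finset

/-- For `n` odd and `2 ≤ i ≤ (n-1)/2` coprime with `n`, no element of `S_n` with cycle
type `(i, i, n - 2i)` preserves a nontrivial partition of the `n` points into blocks of
equal size; i.e. `(i, i, n-2i)` is contained in no imprimitive wreath product
`S_m ≀ S_{n/m}`. -/
theorem cycle_type_iin_not_imprimitive (n i : ℕ) (hn : Odd n) (hi1 : 2 ≤ i)
    (hi2 : i ≤ (n - 1) / 2) (hcop : Nat.gcd i n = 1) :
    ∀ m, m ∣ n → 1 < m → m < n →
      ¬ ∃ (g : Equiv.Perm (Fin n)) (B : Fin n → Fin (n / m))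
          (gB : Equiv.Perm (Fin (n / m))),
          (∀ j, Fintype.card {x // B x = j} = m) ∧ (∀ x, B (g x) = gB (B x)) ∧
          fullCycleType g = {i, i, n - 2 * i} := by
  intro m hmn hm1 hmlt
  rintro ⟨g, B, gB, hfib, hcomm, hct⟩
  obtain ⟨q, hq⟩ := hn
  have h2i : 2 * i < n := by omega
  have hn0 : 0 < n := by omega
  -- arithmetic preliminaries
  have hne2 : ¬ (2 ∣ m) := by
    intro h
    have h2n : 2 ∣ n := h.trans hmn
    omega
  have hmi : ¬ m ∣ i := by
    intro h
    have h1 := Nat.dvd_gcd h hmn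
    rw [hcop] at h1
    have := Nat.le_of_dvd one_pos h1
    omega
  have hcop2 : Nat.Coprime m 2 :=
    ((Nat.Prime.coprime_iff_not_dvd Nat.prime_two).mpr hne2).symm
  have hm2i : ¬ m ∣ 2 * i := by
    intro h
    exact hmi (hcop2.dvd_of_dvd_mul_right (by rwa [Nat.mul_comm] at h))
  have hine : i ≠ n - 2 * i := by
    intro h
    have h3 : i ∣ n := ⟨3, by omega⟩
    have h1 := Nat.dvd_gcd (dvd_refl i) h3
    rw [hcop] at h1
    have := Nat.le_of_dvd one_pos h1
    omega
  have hd1 : ∀ d : ℕ, d ∣ i → d ∣ (n - 2 * i) → d = 1 := by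
    intro d h1 h2
    have hdn : d ∣ n := by
      have h3 := Nat.dvd_add (Nat.dvd_add h1 h1) h2
      rwa [show i + i + (n - 2 * i) = n by omega] at h3
    have h4 := Nat.dvd_gcd h1 hdn
    rw [hcop] at h4
    exact Nat.dvd_one.mp h4
  -- cycle type analysis
  unfold fullCycleType at hct
  have hct1 : Multiset.count 1 g.cycleType = 0 :=
    Multiset.count_eq_zero.mpr (fun h => by
      have := Equiv.Perm.two_le_of_mem_cycleType h; omega)
  have hfval : Fintype.card {x : Fin n // g x = x} =
      Multiset.count 1 ({i, i, n - 2 * i} : Multiset ℕ) := by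
    have h := congrArg (Multiset.count 1) hct
    rwa [Multiset.count_add, hct1, Multiset.count_replicate_self, zero_add] at h
  have key : (∀ x : Fin n, (orb g x).card = i ∨ (orb g x).card = n - 2 * i) ∧
      (Finset.univ.filter (fun x : Fin n => (orb g x).card = n - 2 * i)).card = n - 2 * i := by
    rcases (show n - 2 * i = 1 ∨ 2 ≤ n - 2 * i by omega) with hv1 | hv2
    · -- case `n - 2i = 1` : one fixed point and two `i`-cycles
      have hfv : Fintype.card {x : Fin n // g x = x} = 1 := by
        rw [hfval, hv1]
        simp only [Multiset.insert_eq_cons]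
        rw [Multiset.count_cons_of_ne (by omega), Multiset.count_cons_of_ne (by omega),
          Multiset.count_singleton, if_pos rfl]
      have hctB : g.cycleType = {i, i} := by
        have h : g.cycleType + Multiset.replicate (Fintype.card {x : Fin n // g x = x}) 1 =
            ({i, i} : Multiset ℕ) +
              Multiset.replicate (Fintype.card {x : Fin n // g x = x}) 1 := by
          rw [hct, hfv, hv1]
          rfl
        exact add_right_cancel h
      have hfix : (Finset.univ.filter (fun x : Fin n => g x = x)).card = 1 := by
        rw [← hfv]
        exact (Fintype.card_subtype _).symm
      constructor
      · intro x
        by_cases hx : g x = x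
        · right; rw [orb_eq_of_fixed hx, Finset.card_singleton, hv1]
        · left
          have h := card_orb_mem_cycleType hx
          rw [hctB] at h
          simp only [Multiset.insert_eq_cons, Multiset.mem_cons, Multiset.mem_singleton] at h
          tauto
      · have hset : Finset.univ.filter (fun x : Fin n => (orb g x).card = n - 2 * i) =
            Finset.univ.filter (fun x : Fin n => g x = x) := by
          ext x
          simp only [Finset.mem_filter, Finset.mem_univ, true_and]
          constructor
          · intro hx
            by_contra hgx
            have hm := card_orb_mem_cycleType hgx
            rw [hctB] at hm
            simp only [Multiset.insert_eq_cons, Multiset.mem_cons, Multiset.mem_singleton] at hm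
            have : (orb g x).card = i := by tauto
            omega
          · intro hgx
            rw [orb_eq_of_fixed hgx, Finset.card_singleton]
            omega
        rw [hset, hfix]
        omega
    · -- case `n - 2i ≥ 2` : no fixed points, cycle type `{i, i, n - 2i}`
      have hfv : Fintype.card {x : Fin n // g x = x} = 0 := by
        rw [hfval]
        simp only [Multiset.insert_eq_cons]
        rw [Multiset.count_cons_of_ne (by omega), Multiset.count_cons_of_ne (by omega),
          Multiset.count_singleton, if_neg (by omega)]
      have hctA : g.cycleType = {i, i, n - 2 * i} := by
        rw [hfv, Multiset.replicate_zero, add_zero] at hct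
        exact hct
      have hnofix : ∀ x : Fin n, g x ≠ x := by
        intro x hx
        exact (Fintype.card_eq_zero_iff.mp hfv).elim ⟨x, hx⟩
      constructor
      · intro x
        have h := card_orb_mem_cycleType (hnofix x)
        rw [hctA] at h
        simp only [Multiset.insert_eq_cons, Multiset.mem_cons, Multiset.mem_singleton] at h
        tauto
      · have hcnt : Multiset.count (n - 2 * i) g.cycleType = 1 := by
          rw [hctA]
          simp only [Multiset.insert_eq_cons]
          rw [Multiset.count_cons_of_ne (by omega), Multiset.count_cons_of_ne (by omega),
            Multiset.count_singleton, if_pos rfl]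
        rw [Equiv.Perm.cycleType_def, Multiset.count_map] at hcnt
        obtain ⟨c3, hc3⟩ := Multiset.card_eq_one.mp hcnt
        have hc3mem : c3 ∈ g.cycleFactorsFinset.val ∧ n - 2 * i = c3.support.card := by
          have h := hc3 ▸ Multiset.mem_singleton_self c3
          exact Multiset.mem_filter.mp h
        have huniq : ∀ c, c ∈ g.cycleFactorsFinset → n - 2 * i = c.support.card → c = c3 := by
          intro c hc hcard
          have h : c ∈ Multiset.filter
              (fun c => n - 2 * i = (Finset.card ∘ Equiv.Perm.support) c)
              g.cycleFactorsFinset.val :=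
            Multiset.mem_filter.mpr ⟨hc, hcard⟩
          rw [hc3] at h
          exact Multiset.mem_singleton.mp h
        have hset : Finset.univ.filter (fun x : Fin n => (orb g x).card = n - 2 * i) =
            c3.support := by
          ext x
          simp only [Finset.mem_filter, Finset.mem_univ, true_and]
          constructor
          · intro hx
            have hgx : g x ≠ x := hnofix x
            have h1 : g.cycleOf x = c3 := by
              apply huniq
              · exact Equiv.Perm.cycleOf_mem_cycleFactorsFinset_iff.mpr
                  (Equiv.Perm.mem_support.mpr hgx)
              · rw [← orb_eq_support_cycleOf hgx, hx]
            rw [← h1]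
            exact (Equiv.Perm.mem_support_cycleOf_iff' hgx).mpr (Equiv.Perm.SameCycle.refl _ _)
          · intro hx
            have hc3F : c3 ∈ g.cycleFactorsFinset := hc3mem.1
            have h1 : c3 = g.cycleOf x := Equiv.Perm.cycle_is_cycleOf hx hc3F
            have hgx : g x ≠ x := hnofix x
            rw [orb_eq_support_cycleOf hgx, ← h1]
            exact hc3mem.2.symm
        rw [hset]
        exact hc3mem.2.symm
  obtain ⟨hQ1, hQ2⟩ := key
  have hQ3 : (Finset.univ.filter (fun x : Fin n => (orb g x).card = i)).card = 2 * i := by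
    have hsplit := Finset.card_filter_add_card_filter_not
      (s := (Finset.univ : Finset (Fin n))) (p := fun x => (orb g x).card = i)
    have hng : Finset.univ.filter (fun x : Fin n => ¬ (orb g x).card = i) =
        Finset.univ.filter (fun x : Fin n => (orb g x).card = n - 2 * i) := by
      apply Finset.filter_congr
      intro x _
      have := hQ1 x
      constructor <;> intro <;> omega
    rw [hng, hQ2, Finset.card_univ, Fintype.card_fin] at hsplit
    omega
  -- the block structure
  have hBpow : ∀ (t : ℕ) (x : Fin n), B ((g ^ t) x) = (gB ^ t) (B x) := by
    intro t
    induction t with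
    | zero => intro x; simp
    | succ t ih =>
      intro x
      rw [pow_succ, pow_succ, Equiv.Perm.mul_apply, Equiv.Perm.mul_apply, ih, hcomm]
  have hBsc : ∀ x y : Fin n, g.SameCycle x y → gB.SameCycle (B x) (B y) := by
    intro x y h
    obtain ⟨t, _, hty⟩ := Equiv.Perm.SameCycle.exists_pow_eq' h
    exact ⟨(t : ℤ), by rw [zpow_natCast, ← hBpow, hty]⟩
  set x0 : Fin n := ⟨0, hn0⟩ with hx0
  set j : Fin (n / m) := B x0 with hj
  set d := (orb gB j).card with hd
  set U : Finset (Fin n) := Finset.univ.filter (fun x => gB.SameCycle j (B x)) with hU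
  have hUmem : ∀ {x : Fin n}, x ∈ U ↔ gB.SameCycle j (B x) := by
    intro x; simp [hU]
  have hUcard : U.card = d * m := by
    have h1 : ∀ x ∈ U, B x ∈ orb gB j := fun x hx => mem_orb.mpr (hUmem.mp hx)
    rw [Finset.card_eq_sum_card_fiberwise h1]
    have h2 : ∀ l ∈ orb gB j, (U.filter (fun x => B x = l)).card = m := by
      intro l hl
      have he : U.filter (fun x => B x = l) = Finset.univ.filter (fun x => B x = l) := by
        ext x
        simp only [Finset.mem_filter, Finset.mem_univ, true_and, hU]
        constructor
        · exact fun h => h.2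
        · intro h
          exact ⟨by rw [h]; exact mem_orb.mp hl, h⟩
      rw [he, ← Fintype.card_subtype, hfib l]
    rw [Finset.sum_congr rfl h2, Finset.sum_const, smul_eq_mul]
  have hUclosed : ∀ x ∈ U, orb g x ⊆ U := by
    intro x hx y hy
    have h1 : gB.SameCycle j (B x) := hUmem.mp hx
    have h2 := hBsc x y (mem_orb.mp hy)
    exact hUmem.mpr (h1.trans h2)
  have hd_dvd : ∀ x ∈ U, d ∣ (orb g x).card := by
    intro x hx
    have h1 : (gB ^ (orb g x).card) (B x) = B x := by rw [← hBpow, pow_card_orb]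
    have h2 := card_orb_dvd h1
    have h3 : orb gB j = orb gB (B x) := orb_eq_of_sameCycle (hUmem.mp hx)
    rw [hd, h3]
    exact h2
  -- counting within U
  have hsum : (U.filter (fun x => (orb g x).card = i)).card +
      (U.filter (fun x => (orb g x).card = n - 2 * i)).card = U.card := by
    have hsplit := Finset.card_filter_add_card_filter_not
      (s := U) (p := fun x => (orb g x).card = i)
    have hng : U.filter (fun x => ¬ (orb g x).card = i) =
        U.filter (fun x => (orb g x).card = n - 2 * i) := by
      apply Finset.filter_congr
      intro x _
      have := hQ1 x
      constructor <;> intro <;> omega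
    rwa [hng] at hsplit
  have hcnt_i : i ∣ (U.filter (fun x => (orb g x).card = i)).card := by
    apply dvd_card_of_orbit_closed
    · intro x hx y hy
      have h1 := Finset.mem_filter.mp hx
      refine Finset.mem_filter.mpr ⟨hUclosed x h1.1 hy, ?_⟩
      rw [← orb_eq_of_sameCycle (mem_orb.mp hy)]
      exact h1.2
    · exact fun x hx => (Finset.mem_filter.mp hx).2
  have hcnt_3 : (n - 2 * i) ∣ (U.filter (fun x => (orb g x).card = n - 2 * i)).card := by
    apply dvd_card_of_orbit_closed
    · intro x hx y hy
      have h1 := Finset.mem_filter.mp hx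
      refine Finset.mem_filter.mpr ⟨hUclosed x h1.1 hy, ?_⟩
      rw [← orb_eq_of_sameCycle (mem_orb.mp hy)]
      exact h1.2
    · exact fun x hx => (Finset.mem_filter.mp hx).2
  have hle_i : (U.filter (fun x => (orb g x).card = i)).card ≤ 2 * i := by
    have h := Finset.card_le_card
      (Finset.filter_subset_filter (fun x => (orb g x).card = i) (Finset.subset_univ U))
    omega
  have hle_3 : (U.filter (fun x => (orb g x).card = n - 2 * i)).card ≤ n - 2 * i := by
    have h := Finset.card_le_card
      (Finset.filter_subset_filter (fun x => (orb g x).card = n - 2 * i) (Finset.subset_univ U))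
    omega
  have hd_i : (U.filter (fun x => (orb g x).card = i)).card ≠ 0 → d ∣ i := by
    intro h
    obtain ⟨x, hx⟩ := Finset.card_pos.mp (Nat.pos_of_ne_zero h)
    have h1 := Finset.mem_filter.mp hx
    have h2 := hd_dvd x h1.1
    rwa [h1.2] at h2
  have hd_3 : (U.filter (fun x => (orb g x).card = n - 2 * i)).card ≠ 0 → d ∣ (n - 2 * i) := by
    intro h
    obtain ⟨x, hx⟩ := Finset.card_pos.mp (Nat.pos_of_ne_zero h)
    have h1 := Finset.mem_filter.mp hx
    have h2 := hd_dvd x h1.1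
    rwa [h1.2] at h2
  have hUne : U.card ≠ 0 := by
    refine Finset.card_ne_zero_of_mem (a := x0) (hUmem.mpr ?_)
    rw [hj]
  -- final arithmetic
  obtain ⟨e, he⟩ := hcnt_i
  obtain ⟨e3, he3⟩ := hcnt_3
  have he2 : e ≤ 2 := by
    rw [he, Nat.mul_comm 2 i] at hle_i
    exact Nat.le_of_mul_le_mul_left hle_i (by omega)
  have he3le : e3 ≤ 1 := by
    rw [he3] at hle_3
    have : (n - 2 * i) * e3 ≤ (n - 2 * i) * 1 := by omega
    exact Nat.le_of_mul_le_mul_left this (by omega)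
  have hdm : d * m = i * e + (n - 2 * i) * e3 := by
    rw [← he, ← he3, hsum, hUcard]
  have hdm0 : d * m ≠ 0 := by rw [← hUcard]; exact hUne
  have he' : e = 0 ∨ e = 1 ∨ e = 2 := by omega
  have he3' : e3 = 0 ∨ e3 = 1 := by omega
  rcases he' with rfl | rfl | rfl <;> rcases he3' with rfl | rfl
  · -- (0, 0): U empty
    simp only [Nat.mul_zero, Nat.add_zero] at hdm
    exact hdm0 hdm
  · -- (0, 1): d * m = n - 2i
    have hcase : d * m = n - 2 * i := by simpa using hdm
    have h1 : m ∣ n - 2 * i := by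
      have h := dvd_mul_left m d
      rwa [hcase] at h
    have h2 := Nat.dvd_sub hmn h1
    rw [show n - (n - 2 * i) = 2 * i by omega] at h2
    exact hm2i h2
  · -- (1, 0): d * m = i
    have hcase : d * m = i := by simpa using hdm
    have h1 : m ∣ i := by
      have h := dvd_mul_left m d
      rwa [hcase] at h
    exact hmi h1
  · -- (1, 1): d = 1, m = n - i
    have h1 : d ∣ i := hd_i (by omega)
    have h3 : d ∣ (n - 2 * i) := hd_3 (by omega)
    have hdone : d = 1 := hd1 d h1 h3
    rw [hdone, one_mul] at hdm
    have h5 : m + i = n := by omega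
    rw [← h5] at hmn
    exact hmi ((Nat.dvd_add_right (dvd_refl m)).mp hmn)
  · -- (2, 0): d * m = 2i
    have hcase : d * m = 2 * i := by
      rw [hdm]
      ring
    have h1 : m ∣ 2 * i := by
      have h := dvd_mul_left m d
      rwa [hcase] at h
    exact hm2i h1
  · -- (2, 1): d = 1, m = n
    have h1 : d ∣ i := hd_i (by omega)
    have h3 : d ∣ (n - 2 * i) := hd_3 (by omega)
    have hdone : d = 1 := hd1 d h1 h3
    rw [hdone, one_mul] at hdm
    omega
end

section
/- Let x ∈ A_n with C_{S_n}(x) ⊆ A_n. Then N_{S_n}(⟨x⟩) ≤ A_n if and only if the intersection of the A_n-conjugacy class of x with ⟨x⟩ equals the intersection of the S_n-conjugacy class of x with ⟨x⟩. -/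
private lemma zpowers_eq_of_mem_of_orderOf_eq {G : Type*} [Group G] [Finite G] {x y : G}
    (hy : y ∈ Subgroup.zpowers x) (ho : orderOf y = orderOf x) :
    Subgroup.zpowers y = Subgroup.zpowers x := by
  have hle : Subgroup.zpowers y ≤ Subgroup.zpowers x := Subgroup.zpowers_le.mpr hy
  apply SetLike.coe_injective
  apply Set.eq_of_subset_of_ncard_le hle
  · have h1 : (Subgroup.zpowers y : Set G).ncard = orderOf y := by
      rw [← Nat.card_coe_set_eq, SetLike.coe_sort_coe, Nat.card_zpowers]
    have h2 : (Subgroup.zpowers x : Set G).ncard = orderOf x := by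
      rw [← Nat.card_coe_set_eq, SetLike.coe_sort_coe, Nat.card_zpowers]
    rw [h1, h2, ho]

/-- For `x ∈ A_n` with `C_{S_n}(x) ⊆ A_n`: the normalizer `N_{S_n}(⟨x⟩)` is contained in
`A_n` if and only if `cl_{A_n}(x) ∩ ⟨x⟩ = cl_{S_n}(x) ∩ ⟨x⟩`. -/
theorem normalizer_le_alternating_iff_classes_agree (n : ℕ) (x : Equiv.Perm (Fin n))
    (hx : x ∈ alternatingGroup (Fin n))
    (hc : Subgroup.centralizer {x} ≤ alternatingGroup (Fin n)) :
    (Subgroup.normalizer (Subgroup.zpowers x) ≤ alternatingGroup (Fin n)) ↔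
      ({y | ∃ g ∈ alternatingGroup (Fin n), g * x * g⁻¹ = y} ∩
          {y | y ∈ Subgroup.zpowers x} =
        {y : Equiv.Perm (Fin n) | ∃ g, g * x * g⁻¹ = y} ∩
          {y | y ∈ Subgroup.zpowers x}) := by
  constructor
  · intro hN
    ext y
    simp only [Set.mem_inter_iff, Set.mem_setOf_eq]
    constructor
    · rintro ⟨⟨g, _, rfl⟩, hy⟩
      exact ⟨⟨g, rfl⟩, hy⟩
    · rintro ⟨⟨g, rfl⟩, hy⟩
      refine ⟨⟨g, ?_, rfl⟩, hy⟩
      apply hN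
      have ho : orderOf (g * x * g⁻¹) = orderOf x :=
        (SemiconjBy.orderOf_eq g (SemiconjBy.conj_mk g x)).symm
      have hz : Subgroup.zpowers (g * x * g⁻¹) = Subgroup.zpowers x :=
        zpowers_eq_of_mem_of_orderOf_eq hy ho
      rw [Subgroup.mem_normalizer_iff]
      intro h
      constructor
      · rintro ⟨k, rfl⟩
        rw [← hz]
        exact ⟨k, conj_zpow⟩
      · intro hh
        rw [← hz] at hh
        obtain ⟨k, hk⟩ := hh
        refine ⟨k, ?_⟩
        simp only [conj_zpow] at hk
        have h1 : x ^ k * g⁻¹ = h * g⁻¹ := mul_left_cancel hk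
        exact mul_right_cancel h1
  · intro hEq g hg
    have hx' : g * x * g⁻¹ ∈ Subgroup.zpowers x :=
      (Subgroup.mem_normalizer_iff.mp hg x).mp (Subgroup.mem_zpowers x)
    have hmem : g * x * g⁻¹ ∈ ({y | ∃ h ∈ alternatingGroup (Fin n), h * x * h⁻¹ = y} ∩
        {y | y ∈ Subgroup.zpowers x} : Set (Equiv.Perm (Fin n))) := by
      rw [hEq]
      exact ⟨⟨g, rfl⟩, hx'⟩
    obtain ⟨⟨h, hh, hhx⟩, -⟩ := hmem
    have hcg : h⁻¹ * g ∈ Subgroup.centralizer {x} := by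
      rw [Subgroup.mem_centralizer_singleton_iff]
      calc h⁻¹ * g * x = h⁻¹ * (g * x * g⁻¹) * g := by group
        _ = h⁻¹ * (h * x * h⁻¹) * g := by rw [hhx]
        _ = x * (h⁻¹ * g) := by group
    have hga : h⁻¹ * g ∈ alternatingGroup (Fin n) := hc hcg
    have : g = h * (h⁻¹ * g) := by group
    rw [this]
    exact mul_mem hh hga
end

section
/- For every even natural number n ≥ 12 with n ≠ 18, the partition z defined as follows belongs to no imprimitive wreath product S_t ≀ S_{n/t} (t a nontrivial divisor of n): if n ≡ 0 (mod 4), z = (1^{n/2 - 1}, n/2 + 1); if n = 2p with p ≥ 7 prime, z = (1^{n/2 - 6}, 2, 3, n/2 + 1). Moreover, in both cases every integer i with 1 ≤ i < n/2 is a partial sum of z. -/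
open Equiv Finset

lemma blockConst {n m : ℕ} (g : Equiv.Perm (Fin n)) (B : Fin n → Fin m)
    (gB : Equiv.Perm (Fin m)) (hBg : ∀ x, B (g x) = gB (B x)) (x : Fin n)
    (hfix : gB (B x) = B x) : ∀ k : ℤ, B ((g ^ k) x) = B x := by
  intro k
  induction k using Int.induction_on with
  | zero => simp
  | succ k ih =>
      have h1 : (g ^ ((k : ℤ) + 1)) x = g ((g ^ (k : ℤ)) x) := by
        rw [add_comm, zpow_add, zpow_one, Equiv.Perm.mul_apply]
      rw [h1, hBg, ih, hfix]
  | pred k ih =>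
      have h1 : g ((g ^ (-(k : ℤ) - 1)) x) = (g ^ (-(k : ℤ))) x := by
        rw [← Equiv.Perm.mul_apply, ← zpow_one_add]
        norm_num
      apply gB.injective
      rw [← hBg, h1, ih, hfix]

lemma cycle_le_fiber {n m : ℕ} (g : Equiv.Perm (Fin n)) (B : Fin n → Fin m)
    (gB : Equiv.Perm (Fin m)) (hBg : ∀ x, B (g x) = gB (B x)) (x : Fin n)
    (hfix : gB (B x) = B x) :
    (g.cycleOf x).support.card ≤ (Finset.univ.filter (fun y => B y = B x)).card := by
  apply Finset.card_le_card
  intro y hy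
  rw [Equiv.Perm.mem_support_cycleOf_iff] at hy
  obtain ⟨⟨k, hk⟩, -⟩ := hy
  simp only [Finset.mem_filter, Finset.mem_univ, true_and]
  rw [← hk]
  exact blockConst g B gB hBg x hfix k

lemma t_dvd_support {n m t : ℕ} (g : Equiv.Perm (Fin n)) (B : Fin n → Fin m)
    (gB : Equiv.Perm (Fin m)) (hBg : ∀ x, B (g x) = gB (B x))
    (hfib : ∀ j, (Finset.univ.filter (fun y => B y = j)).card = t)
    (hmv : ∀ x ∈ g.support, gB (B x) ≠ B x) : t ∣ g.support.card := by
  have hsub : ∀ x ∈ g.support, ∀ y, B y = B x → y ∈ g.support := by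
    intro x hx y hBy
    by_contra hy
    have hfy : g y = y := Equiv.Perm.notMem_support.mp hy
    have h2 := hBg y
    rw [hfy] at h2
    exact hmv x hx (by rw [← hBy]; exact h2.symm)
  have hT : g.support =
      (g.support.image B).biUnion (fun b => Finset.univ.filter (fun y => B y = b)) := by
    ext y
    simp only [Finset.mem_biUnion, Finset.mem_image, Finset.mem_filter, Finset.mem_univ, true_and]
    constructor
    · intro hy; exact ⟨B y, ⟨y, hy, rfl⟩, rfl⟩
    · rintro ⟨b, ⟨x, hx, rfl⟩, hby⟩; exact hsub x hx y hby
  rw [hT, Finset.card_biUnion]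
  · rw [Finset.sum_congr rfl (fun b _ => hfib b), Finset.sum_const, smul_eq_mul]
    exact Dvd.intro _ (mul_comm t _)
  · intro a _ b _ hab
    rw [Function.onFun, Finset.disjoint_left]
    intro y hy hy'
    simp only [Finset.mem_filter, Finset.mem_univ, true_and] at hy hy'
    exact hab (hy ▸ hy')

lemma cycleType_of_full {n : ℕ} (g : Equiv.Perm (Fin n)) :
    g.cycleType = (fullCycleType g).filter (fun k => 2 ≤ k) := by
  unfold fullCycleType
  rw [Multiset.filter_add,
    Multiset.filter_eq_self.mpr (fun k hk => Equiv.Perm.two_le_of_mem_cycleType hk),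
    Multiset.filter_eq_nil.mpr ?_, add_zero]
  intro a ha
  rw [Multiset.eq_of_mem_replicate ha]
  omega

lemma card_full {n : ℕ} (g : Equiv.Perm (Fin n)) :
    (fullCycleType g).card = g.cycleType.card + Fintype.card {x // g x = x} := by
  unfold fullCycleType
  rw [Multiset.card_add, Multiset.card_replicate]

lemma exists_cycle_of_mem {n : ℕ} {g : Equiv.Perm (Fin n)} {ℓ : ℕ} (h : ℓ ∈ g.cycleType)
    (hl : 0 < ℓ) : ∃ x, x ∈ g.support ∧ (g.cycleOf x).support.card = ℓ := by
  rw [Equiv.Perm.cycleType_def, Multiset.mem_map] at h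
  obtain ⟨c, hc, hcard⟩ := h
  have hc' : c ∈ g.cycleFactorsFinset := hc
  have hcard' : c.support.card = ℓ := hcard
  have hne : c.support.Nonempty := by
    rw [← Finset.card_pos, hcard']; exact hl
  obtain ⟨x, hx⟩ := hne
  have hceq : c = g.cycleOf x := Equiv.Perm.cycle_is_cycleOf hx hc'
  refine ⟨x, ?_, ?_⟩
  · rw [← Equiv.Perm.cycleOf_mem_cycleFactorsFinset_iff, ← hceq]; exact hc'
  · rw [← hceq]; exact hcard'
/-- For even `n ≥ 12`, `n ≠ 18`, the partition `z = (1^{n/2-1}, n/2+1)` (if `4 ∣ n`) or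
`z = (1^{n/2-6}, 2, 3, n/2+1)` (if `n = 2p`, `p ≥ 7` prime) belongs to no imprimitive
wreath product `S_t ≀ S_{n/t}`, and every `1 ≤ i < n/2` is a partial sum of `z`. -/
theorem vertex_connected_only_to_n_cycle (n : ℕ) (hn : Even n) (h12 : 12 ≤ n)
    (h18 : n ≠ 18) (z : Multiset ℕ)
    (hz : (n % 4 = 0 ∧ z = (n / 2 + 1) ::ₘ Multiset.replicate (n / 2 - 1) 1) ∨
      (∃ p, Nat.Prime p ∧ 7 ≤ p ∧ n = 2 * p ∧
        z = (n / 2 + 1) ::ₘ 3 ::ₘ 2 ::ₘ Multiset.replicate (n / 2 - 6) 1)) :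
    (∀ t, t ∣ n → 1 < t → t < n →
      ¬ ∃ (g : Equiv.Perm (Fin n)) (B : Fin n → Fin (n / t))
          (gB : Equiv.Perm (Fin (n / t))),
          (∀ j, Fintype.card {x // B x = j} = t) ∧ (∀ x, B (g x) = gB (B x)) ∧
          fullCycleType g = z) ∧
    (∀ i, 1 ≤ i → i < n / 2 → IsPartialSum z i) := by
  constructor
  · intro t hdvd ht1 htn
    rintro ⟨g, B, gB, hfib, hBg, hfull⟩
    have hfib' : ∀ j, (Finset.univ.filter (fun y => B y = j)).card = t := by
      intro j
      rw [← Fintype.card_subtype]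
      exact hfib j
    have hct : g.cycleType = z.filter (fun k => 2 ≤ k) := by
      rw [cycleType_of_full, hfull]
    have hcardz : g.cycleType.card + Fintype.card {x // g x = x} = z.card := by
      rw [← card_full, hfull]
    have h2t : 2 * t ≤ n := by
      obtain ⟨k, hk⟩ := hdvd
      have hk2 : 2 ≤ k := by
        by_contra h
        interval_cases k <;> omega
      calc 2 * t ≤ k * t := Nat.mul_le_mul_right t hk2
        _ = n := by rw [hk, mul_comm]
    rcases hz with ⟨h4, hzeq⟩ | ⟨p, hp, hp7, hnp, hzeq⟩
    · -- case 4 ∣ n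
      have hm2 : 2 ≤ n / 2 + 1 := by omega
      have hrepnil : (Multiset.replicate (n / 2 - 1) 1).filter (fun k => 2 ≤ k) = 0 :=
        Multiset.filter_eq_nil.mpr (fun a ha => by rw [Multiset.eq_of_mem_replicate ha]; omega)
      have hctm : g.cycleType = {n / 2 + 1} := by
        rw [hct, hzeq, Multiset.filter_cons, hrepnil, add_zero, if_pos hm2]
      by_cases hall : ∀ x ∈ g.support, gB (B x) ≠ B x
      · have hdv : t ∣ g.support.card := t_dvd_support g B gB hBg hfib' hall
        have hsc : g.support.card = n / 2 + 1 := by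
          rw [← Equiv.Perm.sum_cycleType, hctm]; simp
        rw [hsc] at hdv
        have ha : t ∣ n + 2 := by
          have he : 2 * (n / 2 + 1) = n + 2 := by omega
          exact he ▸ hdv.mul_left 2
        have h2 : t ∣ 2 := by
          have := Nat.dvd_sub ha hdvd
          simpa using this
        have hle2 : t ≤ 2 := Nat.le_of_dvd (by norm_num) h2
        have ht2 : t = 2 := by omega
        rw [ht2] at hdv
        obtain ⟨k, hk⟩ := hdv
        omega
      · push_neg at hall
        obtain ⟨x, hx, hfx⟩ := hall
        have hle := cycle_le_fiber g B gB hBg x hfx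
        rw [hfib'] at hle
        have hmem : (g.cycleOf x).support.card ∈ g.cycleType := by
          rw [Equiv.Perm.cycleType_def, Multiset.mem_map]
          exact ⟨g.cycleOf x, Equiv.Perm.cycleOf_mem_cycleFactorsFinset_iff.mpr hx, rfl⟩
        rw [hctm, Multiset.mem_singleton] at hmem
        omega
    · -- case n = 2p
      have hn2 : n / 2 = p := by omega
      rw [hn2] at hzeq
      have hrepnil : (Multiset.replicate (n / 2 - 6) 1).filter (fun k => 2 ≤ k) = 0 :=
        Multiset.filter_eq_nil.mpr (fun a ha => by rw [Multiset.eq_of_mem_replicate ha]; omega)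
      rw [hn2] at hrepnil
      have hctm : g.cycleType = {p + 1, 3, 2} := by
        rw [hct, hzeq]
        simp [Multiset.filter_cons, hrepnil, show 2 ≤ p + 1 by omega]
      have hfixc : Fintype.card {x // g x = x} = p - 6 := by
        have hc3 : g.cycleType.card = 3 := by rw [hctm]; rfl
        rw [hzeq, hc3] at hcardz
        simp [Multiset.card_cons, Multiset.card_replicate] at hcardz
        omega
      have ht2p : t = 2 ∨ t = p := by
        by_cases hpt : p ∣ t
        · right
          obtain ⟨s, hs⟩ := hpt
          have hsd : p * s ∣ p * 2 := by rw [← hs, mul_comm p 2, ← hnp]; exact hdvd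
          have hs2 : s ∣ 2 := (mul_dvd_mul_iff_left (by positivity : (p:ℕ) ≠ 0)).mp hsd
          have hs2' : s ≤ 2 := Nat.le_of_dvd (by norm_num) hs2
          interval_cases s <;> omega
        · left
          have hcop : Nat.Coprime t p := (Nat.Prime.coprime_iff_not_dvd hp).mpr hpt |>.symm
          have : t ∣ 2 := hcop.dvd_of_dvd_mul_right (hnp ▸ hdvd)
          have := Nat.le_of_dvd (by norm_num) this
          omega
      rcases ht2p with ht2 | htp
      · -- t = 2 : the 3-cycle argument
        obtain ⟨x, hx, hcx⟩ := exists_cycle_of_mem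
          (show 3 ∈ g.cycleType by rw [hctm]; simp) (by norm_num)
        have hgx : g x ≠ x := Equiv.Perm.mem_support.mp hx
        have hcyc : (g.cycleOf x).IsCycle := Equiv.Perm.isCycle_cycleOf g hgx
        have hord : orderOf (g.cycleOf x) = 3 := by rw [hcyc.orderOf, hcx]
        have hg3 : (g ^ 3) x = x := by
          rw [← Equiv.Perm.cycleOf_pow_apply_self, ← hord, pow_orderOf_eq_one]
          rfl
        have hpow3 : ∀ w : Fin n, (g ^ 3) w = g (g (g w)) := by
          intro w
          rw [pow_succ, pow_succ, pow_one, Equiv.Perm.mul_apply, Equiv.Perm.mul_apply]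
        have hg3' : g (g (g x)) = x := by rw [← hpow3]; exact hg3
        have d2 : g (g x) ≠ g x := fun h => hgx (g.injective h)
        have d3 : g (g x) ≠ x := by
          intro h
          apply hgx
          have h' := congrArg g h
          rw [hg3'] at h'
          exact h'.symm
        by_cases hb0 : gB (B x) = B x
        · have h1 : B (g x) = B x := by rw [hBg, hb0]
          have h2 : B (g (g x)) = B x := by rw [hBg, h1, hb0]
          have hsub3 : ({x, g x, g (g x)} : Finset (Fin n)) ⊆
              Finset.univ.filter (fun y => B y = B x) := by
            intro y hy
            simp only [Finset.mem_insert, Finset.mem_singleton] at hy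
            simp only [Finset.mem_filter, Finset.mem_univ, true_and]
            rcases hy with rfl | rfl | rfl
            · rfl
            · exact h1
            · exact h2
          have hc3 : ({x, g x, g (g x)} : Finset (Fin n)).card = 3 := by
            rw [Finset.card_insert_of_notMem (by simp [Ne.symm hgx, Ne.symm d3]),
              Finset.card_insert_of_notMem (by simp [Ne.symm d2]), Finset.card_singleton]
          have hle := Finset.card_le_card hsub3
          rw [hc3, hfib'] at hle
          omega
        · have e1 : B (g x) = gB (B x) := hBg x
          have e2 : B (g (g x)) = gB (B (g x)) := hBg (g x)
          have e3 : gB (B (g (g x))) = B x := by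
            rw [← hBg (g (g x)), hg3']
          have db1 : B (g x) ≠ B x := by rw [e1]; exact hb0
          have db2 : B (g (g x)) ≠ B x := by
            intro h
            exact hb0 ((congrArg gB h.symm).trans e3)
          have db21 : B (g (g x)) ≠ B (g x) := by
            intro h
            have e2' := e2
            have e3' := e3
            rw [h] at e2' e3'
            exact db1 (e2'.trans e3')
          have hxF : x ∈ Finset.univ.filter (fun y => B y = B x) := by simp
          obtain ⟨y, hyF, hyx⟩ := Finset.exists_mem_ne
            (by rw [hfib' (B x)]; omega) x
          have hBy : B y = B x := (Finset.mem_filter.mp hyF).2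
          have hBgy : B (g y) = B (g x) := by rw [hBg, hBy, ← e1]
          have hBg2y : B (g (g y)) = B (g (g x)) := by rw [hBg, hBgy, ← e2]
          have hBg3y : B (g (g (g y))) = B x := by rw [hBg, hBg2y, e3]
          have hsub2 : ({x, y} : Finset (Fin n)) ⊆
              Finset.univ.filter (fun w => B w = B x) := by
            intro w hw
            rcases Finset.mem_insert.mp hw with rfl | hw'
            · simp
            · rw [Finset.mem_singleton] at hw'
              subst hw'
              simp [hBy]
          have hF : Finset.univ.filter (fun w => B w = B x) = {x, y} :=
            ((Finset.eq_of_subset_of_card_le hsub2 (by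
              rw [hfib' (B x), Finset.card_insert_of_notMem (by simp [Ne.symm hyx]),
                Finset.card_singleton]
              omega))).symm
          have hg3y : g (g (g y)) = y := by
            have hmem : g (g (g y)) ∈ ({x, y} : Finset (Fin n)) := by
              rw [← hF]
              simp [hBg3y]
            rcases Finset.mem_insert.mp hmem with h | h
            · exfalso
              apply hyx
              have h' : g (g (g y)) = g (g (g x)) := by rw [h, hg3']
              exact g.injective (g.injective (g.injective h'))
            · exact Finset.mem_singleton.mp h
          have hgy : g y ≠ y := by
            intro h
            apply db1
            rw [← hBgy, h, hBy]
          have hy_supp : y ∈ g.support := Equiv.Perm.mem_support.mpr hgy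
          have hcyc' : (g.cycleOf y).IsCycle := Equiv.Perm.isCycle_cycleOf g hgy
          have hc'y : ((g.cycleOf y) ^ 3) y = y := by
            rw [Equiv.Perm.cycleOf_pow_apply_self, hpow3, hg3y]
          have hc'1 : (g.cycleOf y) ^ 3 = 1 :=
            hcyc'.pow_eq_one_iff.mpr
              ⟨y, by rw [Equiv.Perm.cycleOf_apply_self]; exact hgy, hc'y⟩
          have hdvd3 : orderOf (g.cycleOf y) ∣ 3 := orderOf_dvd_of_pow_eq_one hc'1
          have hcard' : (g.cycleOf y).support.card = 3 := by
            have h2le := hcyc'.two_le_card_support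
            rw [← hcyc'.orderOf]
            rcases Nat.prime_three.eq_one_or_self_of_dvd _ hdvd3 with h | h
            · rw [hcyc'.orderOf] at h; omega
            · exact h
          have hsuppc : (g.cycleOf x).support = {x, g x, g (g x)} := by
            symm
            apply Finset.eq_of_subset_of_card_le
            · intro w hw
              simp only [Finset.mem_insert, Finset.mem_singleton] at hw
              rw [Equiv.Perm.mem_support_cycleOf_iff]
              rcases hw with rfl | rfl | rfl
              · exact ⟨Equiv.Perm.SameCycle.refl g w, hx⟩
              · exact ⟨⟨1, by simp⟩, hx⟩
              · refine ⟨⟨2, ?_⟩, hx⟩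
                rw [show (2:ℤ) = ((2:ℕ):ℤ) from rfl, zpow_natCast, pow_succ, pow_one,
                  Equiv.Perm.mul_apply]
            · rw [hcx, Finset.card_insert_of_notMem (by simp [Ne.symm hgx, Ne.symm d3]),
                Finset.card_insert_of_notMem (by simp [Ne.symm d2]), Finset.card_singleton]
          have hne : g.cycleOf x ≠ g.cycleOf y := by
            intro h
            have hy3 : y ∈ (g.cycleOf x).support := by
              rw [h, Equiv.Perm.mem_support_cycleOf_iff]
              exact ⟨Equiv.Perm.SameCycle.refl g y, hy_supp⟩
            rw [hsuppc] at hy3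
            simp only [Finset.mem_insert, Finset.mem_singleton] at hy3
            rcases hy3 with rfl | rfl | rfl
            · exact hyx rfl
            · exact db1 hBy
            · exact db2 hBy
          have hcfs : g.cycleOf x ∈ g.cycleFactorsFinset :=
            Equiv.Perm.cycleOf_mem_cycleFactorsFinset_iff.mpr hx
          have hcfs' : g.cycleOf y ∈ g.cycleFactorsFinset :=
            Equiv.Perm.cycleOf_mem_cycleFactorsFinset_iff.mpr hy_supp
          have hle33 : ({3, 3} : Multiset ℕ) ≤ g.cycleType := by
            rw [Equiv.Perm.cycleType_def]
            have hval : ({g.cycleOf x, g.cycleOf y} : Finset (Equiv.Perm (Fin n))).val ≤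
                g.cycleFactorsFinset.val := by
              rw [Finset.val_le_iff]
              intro w hw
              rcases Finset.mem_insert.mp hw with rfl | h
              · exact hcfs
              · exact (Finset.mem_singleton.mp h) ▸ hcfs'
            have hmap := Multiset.map_le_map (f := Finset.card ∘ Equiv.Perm.support) hval
            have hvv : ({g.cycleOf x, g.cycleOf y} : Finset (Equiv.Perm (Fin n))).val =
                g.cycleOf x ::ₘ g.cycleOf y ::ₘ 0 := by
              rw [Finset.insert_val_of_notMem (by simp [hne])]
              rfl
            rw [hvv] at hmap
            simpa [hcx, hcard'] using hmap
          have hcount := Multiset.count_le_of_le 3 hle33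
          have hcz : Multiset.count 3 z = 1 := by
            rw [hzeq]
            rw [Multiset.count_cons, Multiset.count_cons, Multiset.count_cons,
              Multiset.count_replicate]
            have : ¬ (3 : ℕ) = p + 1 := by omega
            simp [this]
          have hcz' : Multiset.count 3 g.cycleType ≤ 1 := by
            rw [← hfull] at hcz
            unfold fullCycleType at hcz
            rw [Multiset.count_add, Multiset.count_replicate] at hcz
            omega
          have : Multiset.count 3 ({3, 3} : Multiset ℕ) = 2 := by decide
          omega
      · -- t = p
        have hnt : n / t = 2 := by
          rw [htp, hnp, Nat.mul_div_cancel _ hp.pos]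
        have hpos : 0 < Fintype.card {x // g x = x} := by rw [hfixc]; omega
        obtain ⟨⟨x₀, hx₀⟩⟩ := Fintype.card_pos_iff.mp hpos
        have hb0 : gB (B x₀) = B x₀ := by rw [← hBg, hx₀]
        have hcard2 : Fintype.card (Fin (n / t)) = 2 := by rw [Fintype.card_fin, hnt]
        have hgBid : ∀ b, gB b = b := by
          intro b
          by_cases hb : b = B x₀
          · rw [hb, hb0]
          · have hsub : ({B x₀, b} : Finset (Fin (n / t))) = Finset.univ := by
              apply Finset.eq_univ_of_card
              rw [Finset.card_insert_of_notMem (by simp [Ne.symm hb]),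
                Finset.card_singleton, hcard2]
            have hmem : gB b ∈ ({B x₀, b} : Finset (Fin (n / t))) := by
              rw [hsub]; exact Finset.mem_univ _
            rcases Finset.mem_insert.mp hmem with h | h
            · exact absurd (gB.injective (by rw [h, hb0])) hb
            · exact Finset.mem_singleton.mp h
        obtain ⟨x, hx, hcx⟩ := exists_cycle_of_mem
          (show p + 1 ∈ g.cycleType by rw [hctm]; simp) (by omega)
        have hle := cycle_le_fiber g B gB hBg x (hgBid _)
        rw [hfib', hcx] at hle
        omega
  · -- partial sums
    intro i hi1 hi2
    rcases hz with ⟨h4, hzeq⟩ | ⟨p, hp, hp7, hnp, hzeq⟩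
    · refine ⟨Multiset.replicate i 1, ?_, by simp⟩
      rw [hzeq]
      exact le_trans ((Multiset.replicate_le_replicate 1).mpr (by omega)) (Multiset.le_cons_self _ _)
    · have hn2 : n / 2 = p := by omega
      rw [hn2] at hi2
      rw [hn2] at hzeq
      rw [hzeq]
      have hple : ∀ (s : Multiset ℕ), (∀ a, Multiset.count a s ≤
          Multiset.count a ((p + 1) ::ₘ 3 ::ₘ 2 ::ₘ Multiset.replicate (p - 6) 1)) →
          s.sum = i → IsPartialSum ((p + 1) ::ₘ 3 ::ₘ 2 ::ₘ Multiset.replicate (p - 6) 1) i :=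
        fun s h hs => ⟨s, Multiset.le_iff_count.mpr h, hs⟩
      by_cases hA : i ≤ p - 6
      · refine hple (Multiset.replicate i 1) ?_ (by simp)
        intro a
        rw [Multiset.count_replicate]
        rw [Multiset.count_cons, Multiset.count_cons, Multiset.count_cons,
          Multiset.count_replicate]
        split_ifs <;> omega
      · by_cases hB : 5 ≤ i
        · refine hple (2 ::ₘ 3 ::ₘ Multiset.replicate (i - 5) 1) ?_ ?_
          · intro a
            simp only [Multiset.count_cons, Multiset.count_replicate]
            split_ifs <;> omega
          · simp [Multiset.sum_cons]
            omega
        · by_cases hC : i ≤ p - 4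
          · refine hple (2 ::ₘ Multiset.replicate (i - 2) 1) ?_ ?_
            · intro a
              simp only [Multiset.count_cons, Multiset.count_replicate]
              split_ifs <;> omega
            · simp [Multiset.sum_cons]
              omega
          · refine hple (3 ::ₘ Multiset.replicate (i - 3) 1) ?_ ?_
            · intro a
              simp only [Multiset.count_cons, Multiset.count_replicate]
              split_ifs <;> omega
            · simp [Multiset.sum_cons]
              omega
end

section
/- Let n ≥ 11 be odd and define w = (2^{(n-3)/2}, 3) if n ≡ 3 (mod 4) and w = (2^{(n-9)/2}, 3^3) if n ≡ 1 (mod 4). Then w is a partition of n into parts defining an even permutation of S_n, and every integer i with 2 ≤ i ≤ (n-1)/2 is a partial sum of w, while 1 is not a partial sum of w. -/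
lemma not_partial_one (w : Multiset ℕ) (h : ∀ a ∈ w, 2 ≤ a) : ¬ IsPartialSum w 1 := by
  rintro ⟨s, hs, hsum⟩
  have hne : s ≠ 0 := by rintro rfl; simp at hsum
  obtain ⟨a, ha⟩ := Multiset.exists_mem_of_ne_zero hne
  have h2 : 2 ≤ a := h a (Multiset.mem_of_le hs ha)
  have := Multiset.single_le_sum (fun x _ => Nat.zero_le x) a ha
  omega

lemma alt_of_full (n : ℕ) (w : Multiset ℕ) (h1 : (1:ℕ) ∉ w)
    (heven : Even (w.sum + Multiset.card w)) (g : Equiv.Perm (Fin n))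
    (hg : fullCycleType g = w) : g ∈ alternatingGroup (Fin n) := by
  have hm : Fintype.card {x // g x = x} = 0 := by
    by_contra h
    have h1' : (1:ℕ) ∈ fullCycleType g := by
      unfold fullCycleType
      rw [Multiset.mem_add]
      right
      simp [Multiset.mem_replicate, h]
    rw [hg] at h1'
    exact h1 h1'
  have hct : g.cycleType = w := by
    unfold fullCycleType at hg
    simpa [hm] using hg
  rw [Equiv.Perm.mem_alternatingGroup, Equiv.Perm.sign_of_cycleType, hct]
  exact Even.neg_one_pow heven

/-- For odd `n ≥ 11`, the partition `w = (2^{(n-3)/2}, 3)` if `n ≡ 3 (mod 4)` and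
`w = (2^{(n-9)/2}, 3^3)` if `n ≡ 1 (mod 4)` is a partition of `n` whose permutations are
even, every `2 ≤ i ≤ (n-1)/2` is a partial sum of `w`, and `1` is not. -/
theorem vertex_connected_only_to_one_nminusone (n : ℕ) (hn : 11 ≤ n) (hodd : Odd n)
    (w : Multiset ℕ)
    (hw : w = if n % 4 = 3 then 3 ::ₘ Multiset.replicate ((n - 3) / 2) 2
      else 3 ::ₘ 3 ::ₘ 3 ::ₘ Multiset.replicate ((n - 9) / 2) 2) :
    (∀ a ∈ w, 0 < a) ∧ w.sum = n ∧
    (∀ g : Equiv.Perm (Fin n), fullCycleType g = w → g ∈ alternatingGroup (Fin n)) ∧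
    (∀ i, 2 ≤ i → i ≤ (n - 1) / 2 → IsPartialSum w i) ∧ ¬ IsPartialSum w 1 := by
  have hno : n % 2 = 1 := Nat.odd_iff.mp hodd
  have hn4 : n % 4 = 3 ∨ n % 4 = 1 := by omega
  rcases hn4 with h4 | h4
  · rw [if_pos h4] at hw
    subst hw
    have hmem : ∀ a ∈ (3 ::ₘ Multiset.replicate ((n - 3) / 2) 2 : Multiset ℕ), 2 ≤ a := by
      intro a ha
      simp only [Multiset.mem_cons, Multiset.mem_replicate] at ha
      rcases ha with h | h <;> omega
    refine ⟨fun a ha => lt_of_lt_of_le (by norm_num) (hmem a ha), ?_, ?_, ?_, not_partial_one _ hmem⟩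
    · simp only [Multiset.sum_cons, Multiset.sum_replicate, smul_eq_mul]
      omega
    · intro g hg
      apply alt_of_full n _ _ _ g hg
      · intro h
        have := hmem 1 h
        omega
      · simp only [Multiset.sum_cons, Multiset.sum_replicate, smul_eq_mul,
          Multiset.card_cons, Multiset.card_replicate]
        rw [Nat.even_iff]
        omega
    · intro i h2i hi
      rcases Nat.even_or_odd i with he | ho
      · rw [Nat.even_iff] at he
        refine ⟨Multiset.replicate (i / 2) 2,
          le_trans ((Multiset.replicate_le_replicate 2).mpr (by omega))
            (Multiset.le_cons_self _ _), ?_⟩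
        simp only [Multiset.sum_replicate, smul_eq_mul]
        omega
      · rw [Nat.odd_iff] at ho
        refine ⟨3 ::ₘ Multiset.replicate ((i - 3) / 2) 2,
          Multiset.cons_le_cons 3 ((Multiset.replicate_le_replicate 2).mpr (by omega)), ?_⟩
        simp only [Multiset.sum_cons, Multiset.sum_replicate, smul_eq_mul]
        omega
  · rw [if_neg (by omega)] at hw
    subst hw
    have hmem : ∀ a ∈ (3 ::ₘ 3 ::ₘ 3 ::ₘ Multiset.replicate ((n - 9) / 2) 2 : Multiset ℕ),
        2 ≤ a := by
      intro a ha
      simp only [Multiset.mem_cons, Multiset.mem_replicate] at ha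
      rcases ha with h | h | h | h <;> omega
    have hrep : ∀ j, j ≤ (n - 9) / 2 → (Multiset.replicate j 2 : Multiset ℕ) ≤
        3 ::ₘ 3 ::ₘ Multiset.replicate ((n - 9) / 2) 2 := by
      intro j hj
      calc (Multiset.replicate j 2 : Multiset ℕ) ≤ Multiset.replicate ((n - 9) / 2) 2 :=
            (Multiset.replicate_le_replicate 2).mpr hj
        _ ≤ 3 ::ₘ Multiset.replicate ((n - 9) / 2) 2 := Multiset.le_cons_self _ _
        _ ≤ 3 ::ₘ 3 ::ₘ Multiset.replicate ((n - 9) / 2) 2 := Multiset.le_cons_self _ _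
    refine ⟨fun a ha => lt_of_lt_of_le (by norm_num) (hmem a ha), ?_, ?_, ?_, not_partial_one _ hmem⟩
    · simp only [Multiset.sum_cons, Multiset.sum_replicate, smul_eq_mul]
      omega
    · intro g hg
      apply alt_of_full n _ _ _ g hg
      · intro h
        have := hmem 1 h
        omega
      · simp only [Multiset.sum_cons, Multiset.sum_replicate, smul_eq_mul,
          Multiset.card_cons, Multiset.card_replicate]
        rw [Nat.even_iff]
        omega
    · intro i h2i hi
      rcases Nat.even_or_odd i with he | ho
      · rw [Nat.even_iff] at he
        by_cases hle : i / 2 ≤ (n - 9) / 2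
        · refine ⟨Multiset.replicate (i / 2) 2,
            le_trans (hrep _ hle) (Multiset.le_cons_self _ _), ?_⟩
          simp only [Multiset.sum_replicate, smul_eq_mul]
          omega
        · refine ⟨3 ::ₘ 3 ::ₘ Multiset.replicate ((i - 6) / 2) 2,
            Multiset.cons_le_cons 3 (Multiset.cons_le_cons 3
              (le_trans ((Multiset.replicate_le_replicate 2).mpr (by omega))
                (Multiset.le_cons_self _ _))), ?_⟩
          simp only [Multiset.sum_cons, Multiset.sum_replicate, smul_eq_mul]
          omega
      · rw [Nat.odd_iff] at ho
        refine ⟨3 ::ₘ Multiset.replicate ((i - 3) / 2) 2,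
          Multiset.cons_le_cons 3 (hrep _ (by omega)), ?_⟩
        simp only [Multiset.sum_cons, Multiset.sum_replicate, smul_eq_mul]
        omega
end
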